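/- arXiv:2210.13208 — 7 statements merged into one kernel-verified Lean document; each statement's English description precedes it below -/
import Mathlib

section
/- For T ∈ B_{A^{1/2}}(H) and λ ∈ [0,1], the inequality 2√(λ(1−λ))·c_A(T)·‖T‖_A ≤ ‖T‖_{(A,λ)}² holds, where c_A(T) = inf{|⟨Tx,x⟩_A| : ‖x‖_A = 1} is the A-Crawford number. -/
open Filter Topology

variable {H : Type*}

/-- The `A`-semi-inner product, paper convention (linear in the first argument):
`⟨x, y⟩_A = ⟨Ax, y⟩`. -/
noncomputable def innA [NormedAddCommGroup H] [InnerProductSpace ℂ H]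
    (A : H →L[ℂ] H) (x y : H) : ℂ :=
  @inner ℂ H _ y (A x)

/-- The seminorm `‖x‖_A = √⟨Ax, x⟩`. -/
noncomputable def normA [NormedAddCommGroup H] [InnerProductSpace ℂ H]
    (A : H →L[ℂ] H) (x : H) : ℝ :=
  Real.sqrt (innA A x x).re

/-- The quantity `√(λ‖Tx‖_A² + (1−λ)|⟨Tx,x⟩_A|²)`. -/
noncomputable def qA [NormedAddCommGroup H] [InnerProductSpace ℂ H]
    (A : H →L[ℂ] H) (l : ℝ) (T : H →L[ℂ] H) (x : H) : ℝ :=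
  Real.sqrt (l * normA A (T x) ^ 2 + (1 - l) * ‖innA A (T x) x‖ ^ 2)

/-- The seminorm `‖T‖_{(A,λ)}`. -/
noncomputable def semNormA [NormedAddCommGroup H] [InnerProductSpace ℂ H]
    (A : H →L[ℂ] H) (l : ℝ) (T : H →L[ℂ] H) : ℝ :=
  sSup {r : ℝ | ∃ x : H, normA A x = 1 ∧ r = qA A l T x}

/-- The `A`-operator seminorm `‖T‖_A`. -/
noncomputable def opNormA [NormedAddCommGroup H] [InnerProductSpace ℂ H]
    (A : H →L[ℂ] H) (T : H →L[ℂ] H) : ℝ :=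
  sSup {r : ℝ | ∃ x : H, normA A x = 1 ∧ r = normA A (T x)}

/-- The `A`-Crawford number `c_A(T)`. -/
noncomputable def crawfordA [NormedAddCommGroup H] [InnerProductSpace ℂ H]
    (A : H →L[ℂ] H) (T : H →L[ℂ] H) : ℝ :=
  sInf {r : ℝ | ∃ x : H, normA A x = 1 ∧ r = ‖innA A (T x) x‖}

set_option synthInstance.maxHeartbeats 2000000
set_option maxHeartbeats 2000000

/-- Cauchy–Schwarz for the `A`-semi-inner product, via the square root of `A`. -/
lemma cauchyA [NormedAddCommGroup H] [InnerProductSpace ℂ H] [CompleteSpace H]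
    (A : H →L[ℂ] H) (hA : A.IsPositive) (u v : H) :
    ‖innA A u v‖ ≤ normA A u * normA A v := by
  have hA' : (0 : H →L[ℂ] H) ≤ A := (ContinuousLinearMap.nonneg_iff_isPositive A).mpr hA
  set S := CFC.sqrt A with hSdef
  have hmul : S * S = A := CFC.sqrt_mul_sqrt_self A hA'
  have hSsa : IsSelfAdjoint S := IsSelfAdjoint.of_nonneg (CFC.sqrt_nonneg (a := A))
  have key : ∀ x y : H, innA A x y = @inner ℂ H _ (S y) (S x) := by
    intro x y
    have : A x = S (S x) := by rw [← hmul]; rfl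
    rw [innA, this]
    exact (hSsa.isSymmetric y (S x)).symm
  have hnorm : ∀ x : H, normA A x = ‖S x‖ := by
    intro x
    have h : (@inner ℂ H _ (S x) (S x)).re = ‖S x‖ ^ 2 := inner_self_eq_norm_sq (𝕜 := ℂ) (S x)
    rw [normA, key x x, h, Real.sqrt_sq (norm_nonneg _)]
  rw [key, hnorm, hnorm]
  calc ‖@inner ℂ H _ (S v) (S u)‖ ≤ ‖S v‖ * ‖S u‖ := norm_inner_le_norm _ _
    _ = ‖S u‖ * ‖S v‖ := mul_comm _ _

lemma normA_nonneg [NormedAddCommGroup H] [InnerProductSpace ℂ H]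
    (A : H →L[ℂ] H) (x : H) : 0 ≤ normA A x := Real.sqrt_nonneg _

theorem crawford_mul_opNorm_le_sq_semNormA
    [NormedAddCommGroup H] [InnerProductSpace ℂ H] [CompleteSpace H]
    (A : H →L[ℂ] H) (hA : A.IsPositive) {l : ℝ} (hl : l ∈ Set.Icc (0 : ℝ) 1)
    (T : H →L[ℂ] H) (hT : BddAbove {r : ℝ | ∃ x : H, normA A x = 1 ∧ r = normA A (T x)}) :
    2 * Real.sqrt (l * (1 - l)) * crawfordA A T * opNormA A T ≤ semNormA A l T ^ 2 := by
  obtain ⟨hl0, hl1⟩ := hl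
  by_cases hne : ∃ x : H, normA A x = 1
  · obtain ⟨x₀, hx₀⟩ := hne
    -- the Crawford number is nonnegative and below every |⟨Tx,x⟩_A|
    have hCbdd : BddBelow {r : ℝ | ∃ x : H, normA A x = 1 ∧ r = ‖innA A (T x) x‖} :=
      ⟨0, fun r ⟨x, _, hr⟩ => hr ▸ norm_nonneg _⟩
    have hCnn : 0 ≤ crawfordA A T :=
      le_csInf ⟨_, ⟨x₀, hx₀, rfl⟩⟩ fun r ⟨x, _, hr⟩ => hr ▸ norm_nonneg _
    -- opNorm bounds
    have hMnn : 0 ≤ opNormA A T :=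
      le_csSup_of_le hT ⟨x₀, hx₀, rfl⟩ (normA_nonneg A (T x₀))
    -- the qA set is bounded above by opNormA
    have hQbdd : BddAbove {r : ℝ | ∃ x : H, normA A x = 1 ∧ r = qA A l T x} := by
      refine ⟨opNormA A T, fun r ⟨x, hx, hr⟩ => ?_⟩
      have ha : normA A (T x) ≤ opNormA A T := le_csSup hT ⟨x, hx, rfl⟩
      have hb : ‖innA A (T x) x‖ ≤ normA A (T x) := by
        have := cauchyA A hA (T x) x
        rwa [hx, mul_one] at this
      have ha0 := normA_nonneg A (T x)
      have hb0 := norm_nonneg (innA A (T x) x)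
      have : l * normA A (T x) ^ 2 + (1 - l) * ‖innA A (T x) x‖ ^ 2
          ≤ opNormA A T ^ 2 := by
        have hb2 : ‖innA A (T x) x‖ ^ 2 ≤ normA A (T x) ^ 2 := by nlinarith
        have ha2 : normA A (T x) ^ 2 ≤ opNormA A T ^ 2 := by nlinarith
        nlinarith
      calc r = qA A l T x := hr
        _ ≤ Real.sqrt (opNormA A T ^ 2) := Real.sqrt_le_sqrt this
        _ = opNormA A T := Real.sqrt_sq hMnn
    have hSnn : 0 ≤ semNormA A l T :=
      le_csSup_of_le hQbdd ⟨x₀, hx₀, rfl⟩ (Real.sqrt_nonneg _)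
    -- key pointwise estimate
    have hkey : ∀ x : H, normA A x = 1 →
        2 * Real.sqrt (l * (1 - l)) * crawfordA A T * normA A (T x) ≤ semNormA A l T ^ 2 := by
      intro x hx
      set a := normA A (T x) with hadef
      set b := ‖innA A (T x) x‖ with hbdef
      have ha0 : 0 ≤ a := normA_nonneg A (T x)
      have hb0 : 0 ≤ b := norm_nonneg _
      have hcb : crawfordA A T ≤ b := csInf_le hCbdd ⟨x, hx, rfl⟩
      have hsq : qA A l T x ^ 2 = l * a ^ 2 + (1 - l) * b ^ 2 := by
        rw [qA]
        refine Real.sq_sqrt ?_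
        have h1 := mul_nonneg hl0 (sq_nonneg (normA A (T x)))
        have h2 := mul_nonneg (by linarith : (0:ℝ) ≤ 1 - l)
          (sq_nonneg (‖innA A (T x) x‖))
        linarith
      have hqle : qA A l T x ≤ semNormA A l T := le_csSup hQbdd ⟨x, hx, rfl⟩
      have hq0 : 0 ≤ qA A l T x := Real.sqrt_nonneg _
      have h1 : 2 * Real.sqrt (l * (1 - l)) * b * a ≤ l * a ^ 2 + (1 - l) * b ^ 2 := by
        have hs : Real.sqrt (l * (1 - l)) = Real.sqrt l * Real.sqrt (1 - l) :=
          Real.sqrt_mul hl0 _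
        have h2 : 2 * (Real.sqrt l * a) * (Real.sqrt (1 - l) * b)
            ≤ (Real.sqrt l * a) ^ 2 + (Real.sqrt (1 - l) * b) ^ 2 := two_mul_le_add_sq _ _
        have e1 : (Real.sqrt l * a) ^ 2 = l * a ^ 2 := by
          rw [mul_pow, Real.sq_sqrt hl0]
        have e2 : (Real.sqrt (1 - l) * b) ^ 2 = (1 - l) * b ^ 2 := by
          rw [mul_pow, Real.sq_sqrt (by linarith)]
        rw [e1, e2] at h2
        calc 2 * Real.sqrt (l * (1 - l)) * b * a
            = 2 * (Real.sqrt l * a) * (Real.sqrt (1 - l) * b) := by rw [hs]; ring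
          _ ≤ l * a ^ 2 + (1 - l) * b ^ 2 := h2
      have h0 : 2 * Real.sqrt (l * (1 - l)) * crawfordA A T * a
          ≤ 2 * Real.sqrt (l * (1 - l)) * b * a := by
        exact mul_le_mul_of_nonneg_right (mul_le_mul_of_nonneg_left hcb
          (by positivity : (0:ℝ) ≤ 2 * Real.sqrt (l * (1 - l)))) ha0
      calc 2 * Real.sqrt (l * (1 - l)) * crawfordA A T * a
          ≤ l * a ^ 2 + (1 - l) * b ^ 2 := h0.trans h1
        _ = qA A l T x ^ 2 := hsq.symm
        _ ≤ semNormA A l T ^ 2 := by nlinarith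
    -- pass to the supremum
    set k := 2 * Real.sqrt (l * (1 - l)) * crawfordA A T with hkdef
    have hk0 : 0 ≤ k := mul_nonneg (by positivity) hCnn
    rcases eq_or_lt_of_le hk0 with hk | hk
    · rw [← hk]; simpa using sq_nonneg (semNormA A l T)
    · have : opNormA A T ≤ semNormA A l T ^ 2 / k := by
        refine csSup_le ⟨_, ⟨x₀, hx₀, rfl⟩⟩ fun r ⟨x, hx, hr⟩ => ?_
        rw [le_div_iff₀ hk, mul_comm, hr]
        exact hkey x hx
      calc k * opNormA A T ≤ k * (semNormA A l T ^ 2 / k) := by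
            exact mul_le_mul_of_nonneg_left this hk0
        _ = semNormA A l T ^ 2 := by field_simp
  · -- all the index sets are empty
    push_neg at hne
    have e1 : {r : ℝ | ∃ x : H, normA A x = 1 ∧ r = ‖innA A (T x) x‖} = ∅ := by
      ext r; simp only [Set.mem_setOf_eq, Set.mem_empty_iff_false, iff_false]
      rintro ⟨x, hx, -⟩; exact hne x hx
    have e2 : {r : ℝ | ∃ x : H, normA A x = 1 ∧ r = normA A (T x)} = ∅ := by
      ext r; simp only [Set.mem_setOf_eq, Set.mem_empty_iff_false, iff_false]
      rintro ⟨x, hx, -⟩; exact hne x hx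
    rw [crawfordA, opNormA, e1, e2, Real.sInf_empty, Real.sSup_empty]
    simpa using sq_nonneg (semNormA A l T)
end

section
/- For every x ∈ H with ‖x‖_A = 1 and T, S ∈ B_{A^{1/2}}(H), λ ∈ [0,1], one has |λ⟨Sx, Tx⟩_A + (1−λ)⟨x, Tx⟩_A⟨Sx, x⟩_A|² ≤ (λ‖Tx‖_A² + (1−λ)|⟨Tx,x⟩_A|²)·(λ‖Sx‖_A² + (1−λ)|⟨Sx,x⟩_A|²). -/
open Filter Topology

variable {H : Type*}

section aux

variable [NormedAddCommGroup H] [InnerProductSpace ℂ H] [CompleteSpace H]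

lemma conjA (A : H →L[ℂ] H) (hA : A.IsPositive) (u v : H) :
    (starRingEnd ℂ) (@inner ℂ H _ v (A u)) = @inner ℂ H _ u (A v) := by
  have h := hA.isSelfAdjoint
  rw [ContinuousLinearMap.isSelfAdjoint_iff_isSymmetric] at h
  rw [inner_conj_symm]
  exact h u v

/-- The pre-inner-product core induced by a positive operator. -/
noncomputable def coreA (A : H →L[ℂ] H) (hA : A.IsPositive) :
    PreInnerProductSpace.Core ℂ H where
  inner u v := @inner ℂ H _ u (A v)
  conj_inner_symm x y := conjA A hA x y
  re_inner_nonneg x := hA.re_inner_nonneg_right x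
  add_left x y z := inner_add_left _ _ _
  smul_left x y r := inner_smul_left _ _ _

lemma innA_self_re_nonneg (A : H →L[ℂ] H) (hA : A.IsPositive) (u : H) :
    0 ≤ (innA A u u).re :=
  hA.re_inner_nonneg_right u

lemma normA_sq (A : H →L[ℂ] H) (hA : A.IsPositive) (u : H) :
    normA A u ^ 2 = (innA A u u).re :=
  Real.sq_sqrt (innA_self_re_nonneg A hA u)

lemma csA (A : H →L[ℂ] H) (hA : A.IsPositive) (u v : H) :
    ‖innA A u v‖ ≤ normA A u * normA A v := by
  have h := @InnerProductSpace.Core.inner_mul_inner_self_le ℂ H _ _ _ (coreA A hA) v u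
  have hsymm : ‖(@inner ℂ H _ u (A v) : ℂ)‖ = ‖(@inner ℂ H _ v (A u) : ℂ)‖ := by
    rw [← conjA A hA u v, RCLike.norm_conj]
  have h' : ‖(innA A u v : ℂ)‖ ^ 2 ≤ (innA A u u).re * (innA A v v).re := by
    have : ‖(@inner ℂ H _ v (A u) : ℂ)‖ * ‖(@inner ℂ H _ u (A v) : ℂ)‖
        ≤ (innA A v v).re * (innA A u u).re := h
    rw [hsymm] at this
    calc ‖(innA A u v : ℂ)‖ ^ 2 = ‖(@inner ℂ H _ v (A u) : ℂ)‖ * ‖(@inner ℂ H _ v (A u) : ℂ)‖ := by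
          rw [sq]; rfl
      _ ≤ (innA A v v).re * (innA A u u).re := this
      _ = (innA A u u).re * (innA A v v).re := mul_comm _ _
  rw [normA, normA, ← Real.sqrt_mul (innA_self_re_nonneg A hA u)]
  have := Real.sqrt_le_sqrt h'
  rw [show ‖innA A u v‖ = ‖(innA A u v : ℂ)‖ from rfl]
  rwa [Real.sqrt_sq (norm_nonneg _)] at this

end aux

theorem abs_cross_sq_le
    [NormedAddCommGroup H] [InnerProductSpace ℂ H] [CompleteSpace H]
    (A : H →L[ℂ] H) (hA : A.IsPositive) {l : ℝ} (hl : l ∈ Set.Icc (0 : ℝ) 1)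
    (T S : H →L[ℂ] H) (hT : BddAbove {r : ℝ | ∃ x : H, normA A x = 1 ∧ r = normA A (T x)}) (hS : BddAbove {r : ℝ | ∃ x : H, normA A x = 1 ∧ r = normA A (S x)})
    (x : H) (hx : normA A x = 1) :
    ‖(l : ℂ) * innA A (S (x)) (T (x)) + ((1 : ℂ) - (l : ℂ)) * innA A (x) (T (x)) * innA A (S (x)) (x)‖ ^ 2 ≤
      (l * normA A (T (x)) ^ 2 + (1 - l) * ‖innA A (T (x)) (x)‖ ^ 2) * (l * normA A (S (x)) ^ 2 + (1 - l) * ‖innA A (S (x)) (x)‖ ^ 2) := by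
  obtain ⟨hl0, hl1⟩ := hl
  set a := normA A (T x) with ha
  set b := ‖innA A (T x) x‖ with hb
  set c := normA A (S x) with hc
  set d := ‖innA A (S x) x‖ with hd
  have ha0 : 0 ≤ a := Real.sqrt_nonneg _
  have hc0 : 0 ≤ c := Real.sqrt_nonneg _
  have hb0 : 0 ≤ b := norm_nonneg _
  have hd0 : 0 ≤ d := norm_nonneg _
  -- |⟨x,Tx⟩_A| = |⟨Tx,x⟩_A|
  have hbx : ‖innA A x (T x)‖ = b := by
    have heq : (innA A (T x) x : ℂ) = starRingEnd ℂ (innA A x (T x)) := by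
      simp only [innA]
      exact (conjA A hA x (T x)).symm
    rw [hb, heq, Complex.norm_conj]
  -- A-Cauchy-Schwarz for the cross term
  have hcs : ‖innA A (S x) (T x)‖ ≤ c * a := csA A hA (S x) (T x)
  -- triangle inequality
  have htri : ‖(l : ℂ) * innA A (S x) (T x)
      + ((1 : ℂ) - (l : ℂ)) * innA A x (T x) * innA A (S x) x‖
      ≤ l * (c * a) + (1 - l) * (b * d) := by
    calc ‖(l : ℂ) * innA A (S x) (T x)
        + ((1 : ℂ) - (l : ℂ)) * innA A x (T x) * innA A (S x) x‖
        ≤ ‖(l : ℂ) * innA A (S x) (T x)‖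
          + ‖((1 : ℂ) - (l : ℂ)) * innA A x (T x) * innA A (S x) x‖ :=
          norm_add_le _ _
      _ = l * ‖innA A (S x) (T x)‖ + (1 - l) * (b * d) := by
          rw [norm_mul, norm_mul, norm_mul, hbx]
          have h1 : ‖(l : ℂ)‖ = l := by
            rw [Complex.norm_real, Real.norm_eq_abs, abs_of_nonneg hl0]
          have h2 : ‖(1 : ℂ) - (l : ℂ)‖ = 1 - l := by
            rw [show (1 : ℂ) - (l : ℂ) = ((1 - l : ℝ) : ℂ) by push_cast; ring,
              Complex.norm_real, Real.norm_eq_abs, abs_of_nonneg (by linarith)]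
          rw [h1, h2]; ring
      _ ≤ l * (c * a) + (1 - l) * (b * d) := by
          have := mul_le_mul_of_nonneg_left hcs hl0
          linarith
  have habs0 : 0 ≤ ‖(l : ℂ) * innA A (S x) (T x)
      + ((1 : ℂ) - (l : ℂ)) * innA A x (T x) * innA A (S x) x‖ := norm_nonneg _
  -- square both sides and use CBS in ℝ²
  have h1l : (0:ℝ) ≤ 1 - l := by linarith
  have hL0 : 0 ≤ l * (c * a) + (1 - l) * (b * d) :=
    add_nonneg (mul_nonneg hl0 (mul_nonneg hc0 ha0)) (mul_nonneg h1l (mul_nonneg hb0 hd0))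
  have hX2 : ‖(l : ℂ) * innA A (S x) (T x)
      + ((1 : ℂ) - (l : ℂ)) * innA A x (T x) * innA A (S x) x‖ ^ 2
      ≤ (l * (c * a) + (1 - l) * (b * d)) ^ 2 := pow_le_pow_left₀ habs0 htri 2
  have hL2 : (l * (c * a) + (1 - l) * (b * d)) ^ 2
      ≤ (l * a ^ 2 + (1 - l) * b ^ 2) * (l * c ^ 2 + (1 - l) * d ^ 2) := by
    nlinarith [mul_nonneg (mul_nonneg hl0 h1l) (sq_nonneg (a * d - b * c))]
  linarith
end

section
/- For bounded operators T, S on a complex Hilbert space H, the equality ‖T+S‖ = ‖T‖ + ‖S‖ holds if and only if there exists a sequence {x_n} of unit vectors in H with lim_{n→∞} ⟨Sx_n, Tx_n⟩ = ‖T‖·‖S‖. -/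
open Filter Topology

/-- For every `ε > 0` there is a unit vector `x` with `‖A‖ - ε ≤ ‖A x‖`. -/
lemma exists_unit_norm_apply_ge
    {H : Type*} [NormedAddCommGroup H] [InnerProductSpace ℂ H]
    [Nontrivial H] (A : H →L[ℂ] H) {ε : ℝ} (hε : 0 < ε) :
    ∃ x : H, ‖x‖ = 1 ∧ ‖A‖ - ε ≤ ‖A x‖ := by
  rcases lt_or_ge (‖A‖ - ε) 0 with h | h
  · obtain ⟨x, hx⟩ := NormedSpace.sphere_nonempty (E := H) (x := 0) (r := 1) |>.mpr zero_le_one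
    refine ⟨x, by simpa using hx, le_trans h.le (norm_nonneg _)⟩
  · have hlt : ‖A‖ - ε < ‖A‖ := by linarith
    obtain ⟨x, hx1, hx2⟩ := A.exists_lt_apply_of_lt_opNorm hlt
    have hx0 : x ≠ 0 := by
      rintro rfl
      simp only [map_zero, norm_zero] at hx2
      linarith
    have hxn : (0 : ℝ) < ‖x‖ := norm_pos_iff.mpr hx0
    refine ⟨(‖x‖ : ℂ)⁻¹ • x, ?_, ?_⟩
    · rw [norm_smul, norm_inv, Complex.norm_real, norm_norm, inv_mul_cancel₀ hxn.ne']
    · rw [map_smul, norm_smul, norm_inv, Complex.norm_real, norm_norm]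
      have : ‖A x‖ ≤ ‖x‖⁻¹ * ‖A x‖ := by
        nth_rewrite 1 [← one_mul ‖A x‖]
        apply mul_le_mul_of_nonneg_right _ (norm_nonneg _)
        rw [le_inv_comm₀ one_pos hxn]
        simpa using hx1.le
      linarith [hx2.le]

theorem norm_add_eq_iff
    {H : Type*} [NormedAddCommGroup H] [InnerProductSpace ℂ H] [CompleteSpace H]
    [Nontrivial H] (T S : H →L[ℂ] H) :
    ‖T + S‖ = ‖T‖ + ‖S‖ ↔
      ∃ x : ℕ → H, (∀ n, ‖x n‖ = 1) ∧
        Tendsto (fun n => @inner ℂ H _ (T (x n)) (S (x n)))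
          atTop (𝓝 ((‖T‖ * ‖S‖ : ℝ) : ℂ)) := by
  constructor
  · -- forward direction
    intro h
    have hchoice : ∀ n : ℕ, ∃ x : H, ‖x‖ = 1 ∧ ‖T + S‖ - 1 / (n + 1) ≤ ‖(T + S) x‖ := by
      intro n
      exact exists_unit_norm_apply_ge (T + S) (by positivity)
    choose x hx hx2 using hchoice
    refine ⟨x, hx, ?_⟩
    set a : ℕ → ℝ := fun n => ‖T (x n)‖ with ha_def
    set b : ℕ → ℝ := fun n => ‖S (x n)‖ with hb_def
    set c : ℕ → ℂ := fun n => @inner ℂ H _ (T (x n)) (S (x n)) with hc_def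
    have haT : ∀ n, a n ≤ ‖T‖ := fun n => by
      simpa [hx n] using T.le_opNorm (x n)
    have hbS : ∀ n, b n ≤ ‖S‖ := fun n => by
      simpa [hx n] using S.le_opNorm (x n)
    have hre_le : ∀ n, (c n).re ≤ a n * b n := fun n => by
      simpa using re_inner_le_norm (𝕜 := ℂ) (T (x n)) (S (x n))
    have habs_le : ∀ n, ‖c n‖ ≤ a n * b n := fun n =>
      norm_inner_le_norm (𝕜 := ℂ) _ _
    have hab_le : ∀ n, a n * b n ≤ ‖T‖ * ‖S‖ := fun n =>
      mul_le_mul (haT n) (hbS n) (norm_nonneg _) (norm_nonneg _)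
    have hsq : ∀ n, ‖(T + S) (x n)‖ ^ 2 = a n ^ 2 + 2 * (c n).re + b n ^ 2 := by
      intro n
      have := norm_add_sq (𝕜 := ℂ) (T (x n)) (S (x n))
      simpa [ha_def, hb_def, hc_def] using this
    -- ‖(T+S) x n‖ → ‖T‖ + ‖S‖
    have hnorm_tendsto : Tendsto (fun n => ‖(T + S) (x n)‖) atTop (𝓝 (‖T‖ + ‖S‖)) := by
      rw [← h]
      refine tendsto_of_tendsto_of_tendsto_of_le_of_le
        (g := fun n : ℕ => ‖T + S‖ - 1 / (n + 1)) (h := fun _ => ‖T + S‖)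
        ?_ tendsto_const_nhds hx2 (fun n => by simpa [hx n] using (T + S).le_opNorm (x n))
      have := tendsto_one_div_add_atTop_nhds_zero_nat (𝕜 := ℝ)
      have := tendsto_const_nhds (x := ‖T + S‖) (f := atTop (α := ℕ)) |>.sub this
      simpa using this
    -- (a n + b n) → ‖T‖ + ‖S‖
    have hab2 : Tendsto (fun n => (a n + b n) ^ 2) atTop (𝓝 ((‖T‖ + ‖S‖) ^ 2)) := by
      refine tendsto_of_tendsto_of_tendsto_of_le_of_le
        (g := fun n => ‖(T + S) (x n)‖ ^ 2) (h := fun _ => (‖T‖ + ‖S‖) ^ 2)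
        (hnorm_tendsto.pow 2) tendsto_const_nhds ?_ ?_
      · intro n
        show ‖(T + S) (x n)‖ ^ 2 ≤ (a n + b n) ^ 2
        nlinarith [hre_le n, hsq n]
      · intro n
        show (a n + b n) ^ 2 ≤ (‖T‖ + ‖S‖) ^ 2
        nlinarith [haT n, hbS n, norm_nonneg (T (x n)), norm_nonneg (S (x n)),
          norm_nonneg T, norm_nonneg S]
    have hab : Tendsto (fun n => a n + b n) atTop (𝓝 (‖T‖ + ‖S‖)) := by
      have := hab2.sqrt
      rw [Real.sqrt_sq (by positivity)] at this
      convert this using 2 with n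
      rw [Real.sqrt_sq (by positivity)]
    have ha : Tendsto a atTop (𝓝 ‖T‖) := by
      have hg : Tendsto (fun n => (a n + b n) - ‖S‖) atTop (𝓝 ‖T‖) := by
        have := hab.sub (tendsto_const_nhds (x := ‖S‖))
        simpa using this
      exact tendsto_of_tendsto_of_tendsto_of_le_of_le hg tendsto_const_nhds
        (fun n => show a n + b n - ‖S‖ ≤ a n by linarith [hbS n]) haT
    have hb : Tendsto b atTop (𝓝 ‖S‖) := by
      have hg : Tendsto (fun n => (a n + b n) - ‖T‖) atTop (𝓝 ‖S‖) := by
        have := hab.sub (tendsto_const_nhds (x := ‖T‖))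
        simpa [add_sub_cancel_left] using this
      exact tendsto_of_tendsto_of_tendsto_of_le_of_le hg tendsto_const_nhds
        (fun n => show a n + b n - ‖T‖ ≤ b n by linarith [haT n]) hbS
    -- real part tends to ‖T‖ * ‖S‖
    have hre : Tendsto (fun n => (c n).re) atTop (𝓝 (‖T‖ * ‖S‖)) := by
      have key : ∀ n, (c n).re = (‖(T + S) (x n)‖ ^ 2 - a n ^ 2 - b n ^ 2) / 2 := by
        intro n; have := hsq n; linarith
      have : Tendsto (fun n => (‖(T + S) (x n)‖ ^ 2 - a n ^ 2 - b n ^ 2) / 2) atTop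
          (𝓝 (((‖T‖ + ‖S‖) ^ 2 - ‖T‖ ^ 2 - ‖S‖ ^ 2) / 2)) :=
        (((hnorm_tendsto.pow 2).sub (ha.pow 2)).sub (hb.pow 2)).div_const 2
      have heq : ((‖T‖ + ‖S‖) ^ 2 - ‖T‖ ^ 2 - ‖S‖ ^ 2) / 2 = ‖T‖ * ‖S‖ := by ring
      rw [heq] at this
      simpa [key] using this
    -- imaginary part tends to 0
    have him : Tendsto (fun n => (c n).im) atTop (𝓝 0) := by
      have hsq_im : ∀ n, (c n).im ^ 2 ≤ (a n * b n) ^ 2 - (c n).re ^ 2 := by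
        intro n
        have h1 : ‖c n‖ ^ 2 = (c n).re ^ 2 + (c n).im ^ 2 := by
          rw [Complex.sq_norm, Complex.normSq_apply]; ring
        nlinarith [habs_le n, norm_nonneg (c n), mul_nonneg (norm_nonneg (T (x n))) (norm_nonneg (S (x n)))]
      have hupper : Tendsto (fun n => (a n * b n) ^ 2 - (c n).re ^ 2) atTop (𝓝 0) := by
        have : Tendsto (fun n => (a n * b n) ^ 2 - (c n).re ^ 2) atTop
            (𝓝 ((‖T‖ * ‖S‖) ^ 2 - (‖T‖ * ‖S‖) ^ 2)) :=
          ((ha.mul hb).pow 2).sub (hre.pow 2)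
        simpa using this
      have him2 : Tendsto (fun n => (c n).im ^ 2) atTop (𝓝 0) := by
        refine tendsto_of_tendsto_of_tendsto_of_le_of_le
          (g := fun _ => (0:ℝ)) (h := fun n => (a n * b n) ^ 2 - (c n).re ^ 2)
          tendsto_const_nhds hupper (fun n => sq_nonneg _) hsq_im
      have habsim : Tendsto (fun n => |(c n).im|) atTop (𝓝 0) := by
        have := him2.sqrt
        simpa [Real.sqrt_sq_eq_abs] using this
      exact tendsto_zero_iff_abs_tendsto_zero _ |>.mpr habsim
    -- assemble the complex limit
    have h1 : Tendsto (fun n => ((c n).re : ℂ)) atTop (𝓝 ((‖T‖ * ‖S‖ : ℝ) : ℂ)) :=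
      (Complex.continuous_ofReal.tendsto _).comp hre
    have h2 : Tendsto (fun n => ((c n).im : ℂ) * Complex.I) atTop (𝓝 0) := by
      have : Tendsto (fun n => ((c n).im : ℂ)) atTop (𝓝 ((0:ℝ):ℂ)) :=
        (Complex.continuous_ofReal.tendsto _).comp him
      simpa using this.mul_const Complex.I
    have := h1.add h2
    simpa [Complex.re_add_im] using this
  · -- reverse direction
    rintro ⟨x, hx, hlim⟩
    rcases eq_or_lt_of_le (norm_nonneg T) with hT | hT
    · have : T = 0 := norm_eq_zero.mp hT.symm
      subst this; simp
    rcases eq_or_lt_of_le (norm_nonneg S) with hS | hS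
    · have : S = 0 := norm_eq_zero.mp hS.symm
      subst this; simp
    set a : ℕ → ℝ := fun n => ‖T (x n)‖ with ha_def
    set b : ℕ → ℝ := fun n => ‖S (x n)‖ with hb_def
    set c : ℕ → ℂ := fun n => @inner ℂ H _ (T (x n)) (S (x n)) with hc_def
    have haT : ∀ n, a n ≤ ‖T‖ := fun n => by
      simpa [hx n] using T.le_opNorm (x n)
    have hbS : ∀ n, b n ≤ ‖S‖ := fun n => by
      simpa [hx n] using S.le_opNorm (x n)
    have hre_le : ∀ n, (c n).re ≤ a n * b n := fun n => by
      simpa using re_inner_le_norm (𝕜 := ℂ) (T (x n)) (S (x n))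
    have hab_le : ∀ n, a n * b n ≤ ‖T‖ * ‖S‖ := fun n =>
      mul_le_mul (haT n) (hbS n) (norm_nonneg _) (norm_nonneg _)
    have hre : Tendsto (fun n => (c n).re) atTop (𝓝 (‖T‖ * ‖S‖)) := by
      have := (Complex.continuous_re.tendsto _).comp hlim
      simpa [Function.comp_def] using this
    have hab : Tendsto (fun n => a n * b n) atTop (𝓝 (‖T‖ * ‖S‖)) :=
      tendsto_of_tendsto_of_tendsto_of_le_of_le hre tendsto_const_nhds hre_le hab_le
    have ha : Tendsto a atTop (𝓝 ‖T‖) := by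
      refine tendsto_of_tendsto_of_tendsto_of_le_of_le
        (g := fun n => (a n * b n) / ‖S‖) (h := fun _ => ‖T‖)
        ?_ tendsto_const_nhds ?_ haT
      · have := hab.div_const ‖S‖
        rwa [mul_div_cancel_right₀ _ hS.ne'] at this
      · intro n
        rw [div_le_iff₀ hS]
        exact mul_le_mul_of_nonneg_left (hbS n) (norm_nonneg _)
    have hb : Tendsto b atTop (𝓝 ‖S‖) := by
      refine tendsto_of_tendsto_of_tendsto_of_le_of_le
        (g := fun n => (a n * b n) / ‖T‖) (h := fun _ => ‖S‖)
        ?_ tendsto_const_nhds ?_ hbS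
      · have := hab.div_const ‖T‖
        rw [mul_comm] at this
        rwa [mul_div_cancel_right₀ _ hT.ne'] at this
      · intro n
        rw [div_le_iff₀ hT, mul_comm (b n)]
        exact mul_le_mul_of_nonneg_right (haT n) (norm_nonneg _)
    have hsq : ∀ n, ‖(T + S) (x n)‖ ^ 2 = a n ^ 2 + 2 * (c n).re + b n ^ 2 := by
      intro n
      have := norm_add_sq (𝕜 := ℂ) (T (x n)) (S (x n))
      simpa [ha_def, hb_def, hc_def] using this
    have hnorm2 : Tendsto (fun n => ‖(T + S) (x n)‖ ^ 2) atTop (𝓝 ((‖T‖ + ‖S‖) ^ 2)) := by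
      have : Tendsto (fun n => a n ^ 2 + 2 * (c n).re + b n ^ 2) atTop
          (𝓝 (‖T‖ ^ 2 + 2 * (‖T‖ * ‖S‖) + ‖S‖ ^ 2)) :=
        ((ha.pow 2).add ((hre.const_mul 2))).add (hb.pow 2)
      have heq : ‖T‖ ^ 2 + 2 * (‖T‖ * ‖S‖) + ‖S‖ ^ 2 = (‖T‖ + ‖S‖) ^ 2 := by ring
      rw [heq] at this
      have heq2 : (fun n => ‖(T + S) (x n)‖ ^ 2) = fun n => a n ^ 2 + 2 * (c n).re + b n ^ 2 :=
        funext fun n => hsq n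
      rwa [heq2]
    have hnorm : Tendsto (fun n => ‖(T + S) (x n)‖) atTop (𝓝 (‖T‖ + ‖S‖)) := by
      have := hnorm2.sqrt
      rw [Real.sqrt_sq (by positivity)] at this
      convert this using 2 with n
      rw [Real.sqrt_sq (norm_nonneg _)]
    have hge : ‖T‖ + ‖S‖ ≤ ‖T + S‖ := by
      refine le_of_tendsto hnorm (Eventually.of_forall fun n => ?_)
      simpa [hx n] using (T + S).le_opNorm (x n)
    exact le_antisymm (norm_add_le T S) hge
end

section
/- For bounded operators T, S on a complex Hilbert space H, the equality w(T+S) = w(T) + w(S) holds if and only if there exists a sequence {x_n} of unit vectors in H with lim_{n→∞} ⟨x_n, Tx_n⟩·⟨Sx_n, x_n⟩ = w(T)·w(S), where w(T) = sup{|⟨Tx,x⟩| : ‖x‖ = 1} is the numerical radius. -/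
open Filter Topology

/-- The numerical radius `w(T) = sup {|⟨Tx, x⟩| : ‖x‖ = 1}` (paper convention
`⟨Tx, x⟩` corresponds to Mathlib's `⟪ x, T x ⟫`). -/
noncomputable def numRad {H : Type*} [NormedAddCommGroup H] [InnerProductSpace ℂ H]
    (T : H →L[ℂ] H) : ℝ :=
  sSup {r : ℝ | ∃ x : H, ‖x‖ = 1 ∧ r = ‖(@inner ℂ H _ x (T x))‖}

section Aux

variable {H : Type*} [NormedAddCommGroup H] [InnerProductSpace ℂ H]

local notation "⟪" x ", " y "⟫" => @inner ℂ H _ x y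

lemma numRad_bdd (T : H →L[ℂ] H) :
    BddAbove {r : ℝ | ∃ x : H, ‖x‖ = 1 ∧ r = ‖⟪x, T x⟫‖} := by
  refine ⟨‖T‖, ?_⟩
  rintro r ⟨x, hx, rfl⟩
  calc ‖⟪x, T x⟫‖ = ‖⟪x, T x⟫‖ := rfl
    _ ≤ ‖x‖ * ‖T x‖ := norm_inner_le_norm x (T x)
    _ ≤ ‖x‖ * (‖T‖ * ‖x‖) := by gcongr; exact T.le_opNorm x
    _ = ‖T‖ := by rw [hx]; ring

lemma abs_inner_le_numRad (T : H →L[ℂ] H) {x : H} (hx : ‖x‖ = 1) :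
    ‖⟪x, T x⟫‖ ≤ numRad T :=
  le_csSup (numRad_bdd T) ⟨x, hx, rfl⟩

lemma numRad_nonneg [Nontrivial H] (T : H →L[ℂ] H) : 0 ≤ numRad T := by
  obtain ⟨x, hx⟩ := exists_norm_eq H zero_le_one
  exact le_trans (norm_nonneg _) (abs_inner_le_numRad T hx)

lemma numRad_add_le [Nontrivial H] (T S : H →L[ℂ] H) :
    numRad (T + S) ≤ numRad T + numRad S := by
  apply csSup_le
  · obtain ⟨x, hx⟩ := exists_norm_eq H zero_le_one
    exact ⟨_, x, hx, rfl⟩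
  · rintro r ⟨y, hy, rfl⟩
    calc ‖⟪y, (T + S) y⟫‖ = ‖⟪y, T y⟫ + ⟪y, S y⟫‖ := by
          simp [inner_add_right]
      _ ≤ ‖⟪y, T y⟫‖ + ‖⟪y, S y⟫‖ := norm_add_le _ _
      _ ≤ numRad T + numRad S :=
          add_le_add (abs_inner_le_numRad T hy) (abs_inner_le_numRad S hy)

lemma exists_unit_seq_tendsto_numRad [Nontrivial H] (T : H →L[ℂ] H) :
    ∃ x : ℕ → H, (∀ n, ‖x n‖ = 1) ∧
      Tendsto (fun n => ‖⟪x n, T (x n)⟫‖) atTop (𝓝 (numRad T)) := by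
  obtain ⟨x0, hx0⟩ := exists_norm_eq H zero_le_one
  obtain ⟨u, -, hu, hmem⟩ := exists_seq_tendsto_sSup
    (S := {r : ℝ | ∃ x : H, ‖x‖ = 1 ∧ r = ‖⟪x, T x⟫‖})
    ⟨_, x0, hx0, rfl⟩ (numRad_bdd T)
  choose x hx1 hx2 using hmem
  refine ⟨x, hx1, ?_⟩
  have : (fun n => ‖⟪x n, T (x n)⟫‖) = u := by
    funext n; exact (hx2 n).symm
  rw [this]; exact hu

lemma complex_key (z w : ℂ) :
    ((starRingEnd ℂ) z * w).re
      = ((‖z + w‖) ^ 2 - (‖z‖) ^ 2 - (‖w‖) ^ 2) / 2 := by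
  simp only [Complex.sq_norm, Complex.normSq_add, Complex.mul_re, Complex.conj_re,
    Complex.conj_im, Complex.normSq_apply, Complex.add_re, Complex.add_im]
  ring

lemma complex_key2 (z w : ℂ) :
    (‖z + w‖) ^ 2
      = (‖z‖) ^ 2 + ((‖w‖) ^ 2 + 2 * ((starRingEnd ℂ) z * w).re) := by
  rw [complex_key]; ring

lemma complex_dist_key (z : ℂ) (r : ℝ) :
    (‖z - (r : ℂ)‖) ^ 2
      = (‖z‖) ^ 2 - 2 * r * z.re + r ^ 2 := by
  simp only [Complex.sq_norm, Complex.normSq_apply, Complex.sub_re, Complex.sub_im,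
    Complex.ofReal_re, Complex.ofReal_im]
  ring

lemma tendsto_of_abs_re {z : ℕ → ℂ} {r : ℝ}
    (habs : Tendsto (fun n => ‖z n‖) atTop (𝓝 r))
    (hre : Tendsto (fun n => (z n).re) atTop (𝓝 r)) :
    Tendsto z atTop (𝓝 (r : ℂ)) := by
  rw [tendsto_iff_norm_sub_tendsto_zero]
  have hsq : Tendsto (fun n => (‖z n - (r : ℂ)‖) ^ 2) atTop (𝓝 0) := by
    have h1 : Tendsto (fun n => (‖z n‖) ^ 2 - 2 * r * (z n).re + r ^ 2)
        atTop (𝓝 (r ^ 2 - 2 * r * r + r ^ 2)) :=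
      ((habs.pow 2).sub ((hre.const_mul (2 * r)).congr (fun n => by ring))).add
        tendsto_const_nhds
    have h2 : r ^ 2 - 2 * r * r + r ^ 2 = 0 := by ring
    rw [h2] at h1
    exact h1.congr fun n => (complex_dist_key (z n) r).symm
  have hs : Tendsto (fun n => Real.sqrt ((‖z n - (r : ℂ)‖) ^ 2))
      atTop (𝓝 (Real.sqrt 0)) := (Real.continuous_sqrt.tendsto _).comp hsq
  simp only [Real.sqrt_zero, Real.sqrt_sq (norm_nonneg _)] at hs
  exact hs.congr fun n => rfl

end Aux

theorem numRad_add_eq_iff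
    {H : Type*} [NormedAddCommGroup H] [InnerProductSpace ℂ H] [CompleteSpace H]
    [Nontrivial H] (T S : H →L[ℂ] H) :
    numRad (T + S) = numRad T + numRad S ↔
      ∃ x : ℕ → H, (∀ n, ‖x n‖ = 1) ∧
        Tendsto (fun n => @inner ℂ H _ (T (x n)) (x n) * @inner ℂ H _ (x n) (S (x n)))
          atTop (𝓝 ((numRad T * numRad S : ℝ) : ℂ)) := by
  have hconj : ∀ y : H, (@inner ℂ H _ (T y) y) = (starRingEnd ℂ) (@inner ℂ H _ y (T y)) :=
    fun y => (inner_conj_symm _ _).symm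
  constructor
  · intro h
    obtain ⟨x, hx1, hx2⟩ := exists_unit_seq_tendsto_numRad (T + S)
    refine ⟨x, hx1, ?_⟩
    set a : ℕ → ℂ := fun n => @inner ℂ H _ (x n) (T (x n)) with ha
    set b : ℕ → ℂ := fun n => @inner ℂ H _ (x n) (S (x n)) with hb
    have hcabs : (fun n => ‖@inner ℂ H _ (x n) ((T + S) (x n))‖)
        = fun n => ‖a n + b n‖ := by
      funext n; simp [ha, hb, inner_add_right]
    rw [h, hcabs] at hx2
    have haw : ∀ n, ‖a n‖ ≤ numRad T := fun n => abs_inner_le_numRad T (hx1 n)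
    have hbw : ∀ n, ‖b n‖ ≤ numRad S := fun n => abs_inner_le_numRad S (hx1 n)
    have hA : Tendsto (fun n => ‖a n‖) atTop (𝓝 (numRad T)) := by
      refine tendsto_of_tendsto_of_tendsto_of_le_of_le
        (g := fun n => ‖a n + b n‖ - numRad S) (h := fun _ => numRad T)
        ?_ tendsto_const_nhds ?_ ?_
      · simpa using hx2.sub (tendsto_const_nhds (x := numRad S))
      · intro n
        have h1 : ‖a n + b n‖ ≤ ‖a n‖ + ‖b n‖ :=
          norm_add_le _ _
        have := hbw n; simp only [sub_le_iff_le_add]; linarith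
      · exact haw
    have hB : Tendsto (fun n => ‖b n‖) atTop (𝓝 (numRad S)) := by
      refine tendsto_of_tendsto_of_tendsto_of_le_of_le
        (g := fun n => ‖a n + b n‖ - numRad T) (h := fun _ => numRad S)
        ?_ tendsto_const_nhds ?_ ?_
      · have := hx2.sub (tendsto_const_nhds (x := numRad T))
        simpa [add_sub_cancel_left] using this
      · intro n
        have h1 : ‖a n + b n‖ ≤ ‖a n‖ + ‖b n‖ :=
          norm_add_le _ _
        have := haw n; simp only [sub_le_iff_le_add]; linarith
      · exact hbw
    have hre : Tendsto (fun n => ((starRingEnd ℂ) (a n) * b n).re) atTop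
        (𝓝 (numRad T * numRad S)) := by
      have h1 := (((hx2.pow 2).sub (hA.pow 2)).sub (hB.pow 2)).div_const 2
      have h2 : ((numRad T + numRad S) ^ 2 - numRad T ^ 2 - numRad S ^ 2) / 2
          = numRad T * numRad S := by ring
      rw [h2] at h1
      exact h1.congr fun n => (complex_key (a n) (b n)).symm
    have habsz : Tendsto (fun n => ‖(starRingEnd ℂ) (a n) * b n‖) atTop
        (𝓝 (numRad T * numRad S)) := by
      have := hA.mul hB
      exact this.congr fun n => by simp [map_mul, Complex.norm_conj]
    have := tendsto_of_abs_re habsz hre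
    refine this.congr fun n => ?_
    simp only [hconj (x n), ha, hb]
  · rintro ⟨x, hx1, hx2⟩
    have hzset : ∀ (A : H →L[ℂ] H), numRad A = 0 →
        ∀ y : H, ‖y‖ = 1 → @inner ℂ H _ y (A y) = 0 := by
      intro A hA y hy
      have h1 := abs_inner_le_numRad A hy
      rw [hA] at h1
      have h2 := norm_nonneg (@inner ℂ H _ y (A y))
      have : ‖@inner ℂ H _ y (A y)‖ = 0 := le_antisymm h1 h2
      exact norm_eq_zero.mp this
    rcases eq_or_lt_of_le (numRad_nonneg T) with hT0 | hTpos
    · have heq : numRad (T + S) = numRad S := by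
        unfold numRad
        congr 1
        ext r
        constructor
        · rintro ⟨y, hy, rfl⟩
          exact ⟨y, hy, by simp [inner_add_right, hzset T hT0.symm y hy]⟩
        · rintro ⟨y, hy, rfl⟩
          exact ⟨y, hy, by simp [inner_add_right, hzset T hT0.symm y hy]⟩
      rw [heq, ← hT0, zero_add]
    rcases eq_or_lt_of_le (numRad_nonneg S) with hS0 | hSpos
    · have heq : numRad (T + S) = numRad T := by
        unfold numRad
        congr 1
        ext r
        constructor
        · rintro ⟨y, hy, rfl⟩
          exact ⟨y, hy, by simp [inner_add_right, hzset S hS0.symm y hy]⟩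
        · rintro ⟨y, hy, rfl⟩
          exact ⟨y, hy, by simp [inner_add_right, hzset S hS0.symm y hy]⟩
      rw [heq, ← hS0, add_zero]
    · set a : ℕ → ℂ := fun n => @inner ℂ H _ (x n) (T (x n)) with ha
      set b : ℕ → ℂ := fun n => @inner ℂ H _ (x n) (S (x n)) with hb
      have hz : Tendsto (fun n => (starRingEnd ℂ) (a n) * b n) atTop
          (𝓝 (((numRad T * numRad S : ℝ) : ℂ))) := by
        refine hx2.congr fun n => ?_
        simp only [hconj (x n), ha, hb]
      have haw : ∀ n, ‖a n‖ ≤ numRad T := fun n => abs_inner_le_numRad T (hx1 n)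
      have hbw : ∀ n, ‖b n‖ ≤ numRad S := fun n => abs_inner_le_numRad S (hx1 n)
      have habs : Tendsto (fun n => ‖a n‖ * ‖b n‖) atTop
          (𝓝 (numRad T * numRad S)) := by
        have := (continuous_norm.tendsto _).comp hz
        have h2 : ‖((numRad T * numRad S : ℝ) : ℂ)‖ = numRad T * numRad S := by
          rw [Complex.norm_real, Real.norm_eq_abs, abs_of_nonneg (by positivity)]
        rw [h2] at this
        exact this.congr fun n => by simp [map_mul, Complex.norm_conj]
      have hre : Tendsto (fun n => ((starRingEnd ℂ) (a n) * b n).re) atTop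
          (𝓝 (numRad T * numRad S)) := by
        have := (Complex.continuous_re.tendsto _).comp hz
        simpa only [Function.comp_def, Complex.ofReal_re] using this
      have hanneg : ∀ n, 0 ≤ ‖a n‖ := fun n => norm_nonneg _
      have hbnneg : ∀ n, 0 ≤ ‖b n‖ := fun n => norm_nonneg _
      have hA : Tendsto (fun n => ‖a n‖) atTop (𝓝 (numRad T)) := by
        refine tendsto_of_tendsto_of_tendsto_of_le_of_le
          (g := fun n => ‖a n‖ * ‖b n‖ / numRad S)
          (h := fun _ => numRad T) ?_ tendsto_const_nhds ?_ haw
        · have := habs.div_const (numRad S)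
          rwa [mul_div_assoc, div_self (ne_of_gt hSpos), mul_one] at this
        · intro n
          rw [div_le_iff₀ hSpos]
          exact mul_le_mul_of_nonneg_left (hbw n) (hanneg n)
      have hB : Tendsto (fun n => ‖b n‖) atTop (𝓝 (numRad S)) := by
        refine tendsto_of_tendsto_of_tendsto_of_le_of_le
          (g := fun n => ‖a n‖ * ‖b n‖ / numRad T)
          (h := fun _ => numRad S) ?_ tendsto_const_nhds ?_ hbw
        · have := habs.div_const (numRad T)
          rwa [mul_comm (numRad T) (numRad S), mul_div_assoc, div_self (ne_of_gt hTpos),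
            mul_one] at this
        · intro n
          rw [div_le_iff₀ hTpos]
          calc ‖a n‖ * ‖b n‖
              ≤ numRad T * ‖b n‖ := mul_le_mul_of_nonneg_right (haw n) (hbnneg n)
            _ = ‖b n‖ * numRad T := mul_comm _ _
      have hcsq : Tendsto (fun n => (‖a n + b n‖) ^ 2) atTop
          (𝓝 ((numRad T + numRad S) ^ 2)) := by
        have h1 := (hA.pow 2).add ((hB.pow 2).add (hre.const_mul 2))
        have h2 : numRad T ^ 2 + (numRad S ^ 2 + 2 * (numRad T * numRad S))
            = (numRad T + numRad S) ^ 2 := by ring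
        rw [h2] at h1
        exact h1.congr fun n => (complex_key2 (a n) (b n)).symm
      have hc : Tendsto (fun n => ‖a n + b n‖) atTop
          (𝓝 (numRad T + numRad S)) := by
        have hs : Tendsto (fun n => Real.sqrt ((‖a n + b n‖) ^ 2)) atTop
            (𝓝 (Real.sqrt ((numRad T + numRad S) ^ 2))) :=
          (Real.continuous_sqrt.tendsto _).comp hcsq
        have hnn : (0 : ℝ) ≤ numRad T + numRad S := by positivity
        simpa [Real.sqrt_sq (norm_nonneg _), Real.sqrt_sq hnn] using hs
      have hge : numRad T + numRad S ≤ numRad (T + S) := by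
        refine le_of_tendsto hc (Eventually.of_forall fun n => ?_)
        have := abs_inner_le_numRad (T + S) (hx1 n)
        have heq : @inner ℂ H _ (x n) ((T + S) (x n)) = a n + b n := by
          simp [ha, hb, inner_add_right]
        rwa [heq] at this
      exact le_antisymm (numRad_add_le T S) hge
end

section
/- Let T, S ∈ B_{A^{1/2}}(H) and λ ∈ [0,1]. T is (A,λ)-Birkhoff–James orthogonal to S (i.e. ‖T + ξS‖_{(A,λ)} ≥ ‖T‖_{(A,λ)} for all ξ ∈ ℂ) if and only if ‖T + ξS‖_{(A,λ)}² ≥ ‖T‖_{(A,λ)}² + |ξ|²·m_{(A,λ)}(S)² for all ξ ∈ ℂ, where m_{(A,λ)}(S) = inf{ √(λ‖Sx‖_A² + (1−λ)|⟨Sx,x⟩_A|²) : ‖x‖_A = 1 }. -/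
set_option maxHeartbeats 1000000
set_option synthInstance.maxHeartbeats 400000

open Filter Topology

variable {H : Type*}

/-- The quantity `m_{(A,λ)}(S) = inf { √(λ‖Sx‖_A² + (1−λ)|⟨Sx,x⟩_A|²) : ‖x‖_A = 1 }`. -/
noncomputable def mA [NormedAddCommGroup H] [InnerProductSpace ℂ H]
    (A : H →L[ℂ] H) (l : ℝ) (S : H →L[ℂ] H) : ℝ :=
  sInf {r : ℝ | ∃ x : H, normA A x = 1 ∧ r = qA A l S x}

/-- Auxiliary: the quantity inside the square root in `qA`, expressed via `R` with `R*R = A`. -/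
noncomputable def Pq [NormedAddCommGroup H] [InnerProductSpace ℂ H]
    (R : H →L[ℂ] H) (l : ℝ) (T : H →L[ℂ] H) (x : H) : ℝ :=
  l * ‖R (T x)‖ ^ 2 + (1 - l) * ‖(inner ℂ (R x) (R (T x)) : ℂ)‖ ^ 2

/-- Auxiliary: cross term. -/
noncomputable def ccq [NormedAddCommGroup H] [InnerProductSpace ℂ H]
    (R : H →L[ℂ] H) (l : ℝ) (T S : H →L[ℂ] H) (x : H) : ℂ :=
  (l : ℂ) * (inner ℂ (R (T x)) (R (S x)) : ℂ) +
    ((1 : ℂ) - l) * ((inner ℂ (R x) (R (S x)) : ℂ) * (starRingEnd ℂ) (inner ℂ (R x) (R (T x)) : ℂ))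

lemma exists_sqrt [NormedAddCommGroup H] [InnerProductSpace ℂ H] [CompleteSpace H]
    (A : H →L[ℂ] H) (hA : A.IsPositive) :
    ∃ R : H →L[ℂ] H, (∀ x, normA A x = ‖R x‖) ∧
      (∀ x y, innA A x y = (inner ℂ (R y) (R x) : ℂ)) := by
  have h0 : (0 : H →L[ℂ] H) ≤ A := (ContinuousLinearMap.nonneg_iff_isPositive A).2 hA
  have hsa : IsSelfAdjoint (CFC.sqrt A) := IsSelfAdjoint.of_nonneg (CFC.sqrt_nonneg A)
  have hmul : CFC.sqrt A * CFC.sqrt A = A := CFC.sqrt_mul_sqrt_self A h0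
  set R := CFC.sqrt A
  have hinn : ∀ x y : H, innA A x y = (inner ℂ (R y) (R x) : ℂ) := by
    intro x y
    rw [innA, ← hmul]
    have h1 : (R * R) x = R (R x) := rfl
    rw [h1, ← ContinuousLinearMap.adjoint_inner_right R y (R x), hsa.adjoint_eq]
  refine ⟨R, fun x => ?_, hinn⟩
  have hsr : (inner ℂ (R x) (R x) : ℂ).re = ‖R x‖ ^ 2 := by
    have h := inner_self_eq_norm_sq (𝕜 := ℂ) (E := H) (R x)
    simpa using h
  rw [normA, hinn x x, hsr, Real.sqrt_sq (norm_nonneg _)]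

lemma Pq_nonneg [NormedAddCommGroup H] [InnerProductSpace ℂ H]
    {R : H →L[ℂ] H} {l : ℝ} (hl0 : 0 ≤ l) (hl1 : l ≤ 1) (T : H →L[ℂ] H) (x : H) :
    0 ≤ Pq R l T x := by
  unfold Pq
  have h1 := sq_nonneg (‖R (T x)‖)
  have h2 := sq_nonneg (‖(inner ℂ (R x) (R (T x)) : ℂ)‖)
  have h3 := mul_le_mul_of_nonneg_right hl0 h1
  have h4 := mul_nonneg hl0 h1
  have h5 := mul_nonneg (by linarith : (0:ℝ) ≤ 1 - l) h2
  linarith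

lemma Pq_le_sq [NormedAddCommGroup H] [InnerProductSpace ℂ H]
    {R : H →L[ℂ] H} {l : ℝ} (hl0 : 0 ≤ l) (hl1 : l ≤ 1) (T : H →L[ℂ] H) {x : H}
    (hx : ‖R x‖ = 1) : Pq R l T x ≤ ‖R (T x)‖ ^ 2 := by
  unfold Pq
  have hcs : ‖(inner ℂ (R x) (R (T x)) : ℂ)‖ ≤ ‖R (T x)‖ := by
    have h := norm_inner_le_norm (𝕜 := ℂ) (R x) (R (T x))
    rw [hx, one_mul] at h
    simpa using h
  have h0 : (0:ℝ) ≤ ‖(inner ℂ (R x) (R (T x)) : ℂ)‖ := norm_nonneg _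
  have hc2 : ‖(inner ℂ (R x) (R (T x)) : ℂ)‖ ^ 2 ≤ ‖R (T x)‖ ^ 2 :=
    pow_le_pow_left₀ h0 hcs 2
  have h6 := mul_le_mul_of_nonneg_left hc2 (show (0:ℝ) ≤ 1 - l by linarith)
  have h7 := mul_le_mul_of_nonneg_right hl1 (sq_nonneg (‖R (T x)‖))
  linarith

lemma qA_eq_sqrt_Pq [NormedAddCommGroup H] [InnerProductSpace ℂ H]
    {A R : H →L[ℂ] H} (hn : ∀ x, normA A x = ‖R x‖)
    (hi : ∀ x y, innA A x y = (inner ℂ (R y) (R x) : ℂ))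
    (l : ℝ) (T : H →L[ℂ] H) (x : H) :
    qA A l T x = Real.sqrt (Pq R l T x) := by
  rw [qA, Pq, hn, hi]

lemma Pq_expand [NormedAddCommGroup H] [InnerProductSpace ℂ H]
    (R : H →L[ℂ] H) (l : ℝ) (T S : H →L[ℂ] H) (x : H) (ξ : ℂ) :
    Pq R l (T + ξ • S) x =
      Pq R l T x + 2 * (ξ * ccq R l T S x).re + ‖ξ‖ ^ 2 * Pq R l S x := by
  have hR : R ((T + ξ • S) x) = R (T x) + ξ • R (S x) := by
    show R (T x + ξ • S x) = _
    rw [map_add, map_smul]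
  have h1 : ‖R ((T + ξ • S) x)‖ ^ 2 =
      ‖R (T x)‖ ^ 2 + 2 * (ξ * (inner ℂ (R (T x)) (R (S x)) : ℂ)).re
        + ‖ξ‖ ^ 2 * ‖R (S x)‖ ^ 2 := by
    rw [hR, @norm_add_sq ℂ, inner_smul_right, norm_smul]
    simp only [RCLike.re_to_complex, mul_pow]
  have h2 : ‖(inner ℂ (R x) (R ((T + ξ • S) x)) : ℂ)‖ ^ 2 =
      ‖(inner ℂ (R x) (R (T x)) : ℂ)‖ ^ 2
        + 2 * (ξ * ((inner ℂ (R x) (R (S x)) : ℂ) *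
            (starRingEnd ℂ) (inner ℂ (R x) (R (T x)) : ℂ))).re
        + ‖ξ‖ ^ 2 * ‖(inner ℂ (R x) (R (S x)) : ℂ)‖ ^ 2 := by
    rw [hR, inner_add_right, inner_smul_right]
    set a := (inner ℂ (R x) (R (T x)) : ℂ)
    set b := (inner ℂ (R x) (R (S x)) : ℂ)
    simp only [Complex.sq_norm]
    simp only [Complex.normSq_apply, Complex.mul_re, Complex.mul_im, Complex.add_re,
      Complex.add_im, Complex.conj_re, Complex.conj_im]
    ring
  rw [Pq, Pq, Pq, ccq, h1, h2]
  set a := (inner ℂ (R x) (R (T x)) : ℂ)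
  set b := (inner ℂ (R x) (R (S x)) : ℂ)
  set c := (inner ℂ (R (T x)) (R (S x)) : ℂ)
  have hre : (ξ * ((l:ℂ) * c + ((1:ℂ) - (l:ℂ)) * (b * (starRingEnd ℂ) a))).re
      = l * (ξ * c).re + (1 - l) * (ξ * (b * (starRingEnd ℂ) a)).re := by
    simp only [Complex.mul_re, Complex.mul_im, Complex.add_re, Complex.add_im,
      Complex.sub_re, Complex.sub_im, Complex.ofReal_re, Complex.ofReal_im,
      Complex.one_re, Complex.one_im]
    ring
  rw [hre]
  ring

lemma ccq_abs_le [NormedAddCommGroup H] [InnerProductSpace ℂ H]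
    {R : H →L[ℂ] H} {l : ℝ} (hl0 : 0 ≤ l) (hl1 : l ≤ 1) (T S : H →L[ℂ] H) {x : H}
    (hx : ‖R x‖ = 1) :
    ‖(ccq R l T S x)‖ ≤ ‖R (T x)‖ * ‖R (S x)‖ := by
  have h1 : ‖((inner ℂ (R (T x)) (R (S x)) : ℂ))‖ ≤ ‖R (T x)‖ * ‖R (S x)‖ := by
    simpa using norm_inner_le_norm (𝕜 := ℂ) (R (T x)) (R (S x))
  have h2 : ‖((inner ℂ (R x) (R (S x)) : ℂ))‖ ≤ ‖R (S x)‖ := by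
    have h := norm_inner_le_norm (𝕜 := ℂ) (R x) (R (S x)); rw [hx, one_mul] at h
    simpa using h
  have h3 : ‖((inner ℂ (R x) (R (T x)) : ℂ))‖ ≤ ‖R (T x)‖ := by
    have h := norm_inner_le_norm (𝕜 := ℂ) (R x) (R (T x)); rw [hx, one_mul] at h
    simpa using h
  have hTnn : (0:ℝ) ≤ ‖R (T x)‖ := norm_nonneg _
  have hSnn : (0:ℝ) ≤ ‖R (S x)‖ := norm_nonneg _
  have e2 : (0:ℝ) ≤ ‖((inner ℂ (R x) (R (S x)) : ℂ))‖ := norm_nonneg _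
  have e3 : (0:ℝ) ≤ ‖((inner ℂ (R x) (R (T x)) : ℂ))‖ := norm_nonneg _
  calc ‖(ccq R l T S x)‖
      ≤ ‖((l:ℂ) * (inner ℂ (R (T x)) (R (S x)) : ℂ))‖
        + ‖(((1:ℂ) - l) * ((inner ℂ (R x) (R (S x)) : ℂ) *
            (starRingEnd ℂ) (inner ℂ (R x) (R (T x)) : ℂ)))‖ := norm_add_le _ _
    _ ≤ ‖R (T x)‖ * ‖R (S x)‖ := by
        rw [norm_mul, norm_mul, norm_mul]
        have hla : ‖((l:ℂ))‖ = l := by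
          rw [Complex.norm_real, Real.norm_eq_abs, abs_of_nonneg hl0]
        have hlb : ‖((1:ℂ) - (l:ℂ))‖ = 1 - l := by
          rw [show ((1:ℂ) - (l:ℂ)) = ((1 - l : ℝ) : ℂ) by push_cast; ring,
            Complex.norm_real, Real.norm_eq_abs, abs_of_nonneg (by linarith)]
        rw [hla, hlb, Complex.norm_conj]
        have k1 : ‖((inner ℂ (R x) (R (S x)) : ℂ))‖ *
            ‖((inner ℂ (R x) (R (T x)) : ℂ))‖ ≤ ‖R (S x)‖ * ‖R (T x)‖ :=
          mul_le_mul h2 h3 e3 hSnn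
        have k2 := mul_le_mul_of_nonneg_left h1 hl0
        have k3 := mul_le_mul_of_nonneg_left k1 (show (0:ℝ) ≤ 1 - l by linarith)
        have k4 : (1 - l) * (‖R (S x)‖ * ‖R (T x)‖) = (1-l) * (‖R (T x)‖ * ‖R (S x)‖) := by ring
        have k5 : l * (‖R (T x)‖ * ‖R (S x)‖) + (1 - l) * (‖R (T x)‖ * ‖R (S x)‖)
            = ‖R (T x)‖ * ‖R (S x)‖ := by ring
        linarith

theorem BJ_orthogonal_iff_sq_ineq
    [NormedAddCommGroup H] [InnerProductSpace ℂ H] [CompleteSpace H]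
    (A : H →L[ℂ] H) (hA : A.IsPositive) {l : ℝ} (hl : l ∈ Set.Icc (0 : ℝ) 1)
    (T S : H →L[ℂ] H) (hT : BddAbove {r : ℝ | ∃ x : H, normA A x = 1 ∧ r = normA A (T x)}) (hS : BddAbove {r : ℝ | ∃ x : H, normA A x = 1 ∧ r = normA A (S x)}) :
    (∀ ξ : ℂ, semNormA A l T ≤ semNormA A l (T + ξ • S)) ↔
      (∀ ξ : ℂ,
        semNormA A l T ^ 2 + ‖ξ‖ ^ 2 * mA A l S ^ 2 ≤
          semNormA A l (T + ξ • S) ^ 2) := by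
  obtain ⟨hl0, hl1⟩ := hl
  obtain ⟨R, hn, hi⟩ := exists_sqrt A hA
  by_cases hex : ∃ x : H, normA A x = 1
  case neg =>
    have hempty : ∀ U : H →L[ℂ] H,
        {r : ℝ | ∃ x : H, normA A x = 1 ∧ r = qA A l U x} = ∅ := by
      intro U; ext r; simp only [Set.mem_setOf_eq, Set.mem_empty_iff_false, iff_false]
      rintro ⟨x, hx, -⟩; exact hex ⟨x, hx⟩
    have hz : ∀ U : H →L[ℂ] H, semNormA A l U = 0 := by
      intro U; unfold semNormA; rw [hempty U, Real.sSup_empty]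
    have hm : mA A l S = 0 := by unfold mA; rw [hempty S, Real.sInf_empty]
    constructor
    · intro _ ξ; rw [hz T, hz (T + ξ • S), hm]; norm_num
    · intro _ ξ; rw [hz T, hz (T + ξ • S)]
  case pos =>
  obtain ⟨x0, hx0⟩ := hex
  obtain ⟨MT, hMT⟩ := hT
  obtain ⟨MS, hMS⟩ := hS
  set MT0 := max MT 0 with hMT0def
  set MS0 := max MS 0 with hMS0def
  have hMT0 : ∀ x : H, normA A x = 1 → ‖R (T x)‖ ≤ MT0 := by
    intro x hx
    have h := hMT ⟨x, hx, rfl⟩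
    rw [hn] at h
    exact le_trans h (le_max_left _ _)
  have hMS0 : ∀ x : H, normA A x = 1 → ‖R (S x)‖ ≤ MS0 := by
    intro x hx
    have h := hMS ⟨x, hx, rfl⟩
    rw [hn] at h
    exact le_trans h (le_max_left _ _)
  have hMT0nn : (0:ℝ) ≤ MT0 := le_max_right _ _
  have hMS0nn : (0:ℝ) ≤ MS0 := le_max_right _ _
  have hunit : ∀ x : H, normA A x = 1 → ‖R x‖ = 1 := by
    intro x hx; rw [← hn]; exact hx
  have hqnn : ∀ (U : H →L[ℂ] H) (x : H), 0 ≤ qA A l U x := fun U x => Real.sqrt_nonneg _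
  have hsq : ∀ (U : H →L[ℂ] H) (x : H), qA A l U x ^ 2 = Pq R l U x := by
    intro U x
    rw [qA_eq_sqrt_Pq hn hi, Real.sq_sqrt (Pq_nonneg (R := R) hl0 hl1 U x)]
  have hqle : ∀ (ξ : ℂ) (x : H), normA A x = 1 →
      qA A l (T + ξ • S) x ≤ MT0 + ‖ξ‖ * MS0 := by
    intro ξ x hx
    rw [qA_eq_sqrt_Pq hn hi]
    have h1 : Pq R l (T + ξ • S) x ≤ ‖R ((T + ξ • S) x)‖ ^ 2 :=
      Pq_le_sq hl0 hl1 _ (hunit x hx)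
    have h2 : ‖R ((T + ξ • S) x)‖ ≤ MT0 + ‖ξ‖ * MS0 := by
      have hRx : R ((T + ξ • S) x) = R (T x) + ξ • R (S x) := by
        show R (T x + ξ • S x) = _; rw [map_add, map_smul]
      rw [hRx]
      have k1 : ‖R (T x) + ξ • R (S x)‖ ≤ ‖R (T x)‖ + ‖ξ • R (S x)‖ := norm_add_le _ _
      have k2 : ‖ξ • R (S x)‖ = ‖ξ‖ * ‖R (S x)‖ := by
        rw [norm_smul]
      have k3 : ‖ξ‖ * ‖R (S x)‖ ≤ ‖ξ‖ * MS0 :=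
        mul_le_mul_of_nonneg_left (hMS0 x hx) (norm_nonneg _)
      have k4 := hMT0 x hx
      linarith
    calc Real.sqrt (Pq R l (T + ξ • S) x) ≤ Real.sqrt (‖R ((T + ξ • S) x)‖ ^ 2) :=
          Real.sqrt_le_sqrt h1
      _ = ‖R ((T + ξ • S) x)‖ := Real.sqrt_sq (norm_nonneg _)
      _ ≤ MT0 + ‖ξ‖ * MS0 := h2
  have hsetne : ∀ U : H →L[ℂ] H,
      {r : ℝ | ∃ x : H, normA A x = 1 ∧ r = qA A l U x}.Nonempty :=
    fun U => ⟨qA A l U x0, x0, hx0, rfl⟩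
  have hbdd : ∀ ξ : ℂ, BddAbove {r : ℝ | ∃ x : H, normA A x = 1 ∧ r = qA A l (T + ξ • S) x} := by
    intro ξ
    refine ⟨MT0 + ‖ξ‖ * MS0, ?_⟩
    rintro r ⟨x, hx, rfl⟩
    exact hqle ξ x hx
  have hbddT : BddAbove {r : ℝ | ∃ x : H, normA A x = 1 ∧ r = qA A l T x} := by
    have h := hbdd 0
    simpa using h
  have hsem_ge : ∀ (ξ : ℂ) (x : H), normA A x = 1 →
      qA A l (T + ξ • S) x ≤ semNormA A l (T + ξ • S) :=
    fun ξ x hx => le_csSup (hbdd ξ) ⟨x, hx, rfl⟩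
  have hsemT_ge : ∀ x : H, normA A x = 1 → qA A l T x ≤ semNormA A l T :=
    fun x hx => le_csSup hbddT ⟨x, hx, rfl⟩
  have hsem_le : ∀ ξ : ℂ, semNormA A l (T + ξ • S) ≤ MT0 + ‖ξ‖ * MS0 :=
    fun ξ => csSup_le (hsetne _) (by rintro r ⟨x, hx, rfl⟩; exact hqle ξ x hx)
  have hsem_nn : ∀ ξ : ℂ, 0 ≤ semNormA A l (T + ξ • S) :=
    fun ξ => le_trans (hqnn _ x0) (hsem_ge ξ x0 hx0)
  have hsemT_nn : 0 ≤ semNormA A l T := le_trans (hqnn T x0) (hsemT_ge x0 hx0)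
  have hm_le : ∀ x : H, normA A x = 1 → mA A l S ≤ qA A l S x :=
    fun x hx => csInf_le ⟨0, by rintro r ⟨y, hy, rfl⟩; exact hqnn S y⟩ ⟨x, hx, rfl⟩
  have hm_nn : 0 ≤ mA A l S :=
    le_csInf (hsetne S) (by rintro r ⟨y, hy, rfl⟩; exact hqnn S y)
  constructor
  · -- hard direction
    intro h ξ
    set N := semNormA A l T with hN
    set m := mA A l S with hmdef
    set Nξ := semNormA A l (T + ξ • S) with hNξ
    set aξ := ‖ξ‖ with haξ
    have haξnn : 0 ≤ aξ := norm_nonneg _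
    set K := MT0 + aξ * MS0 with hK
    have hKnn : 0 ≤ K := by
      rw [hK]; exact add_nonneg hMT0nn (mul_nonneg haξnn hMS0nn)
    set D := 4 * K + 2 * (aξ * (MT0 * MS0)) + 2 * (aξ ^ 2 * MS0 ^ 2) with hD
    have hDnn : 0 ≤ D := by
      have e1 : 0 ≤ aξ * (MT0 * MS0) := mul_nonneg haξnn (mul_nonneg hMT0nn hMS0nn)
      have e2 : 0 ≤ aξ ^ 2 * MS0 ^ 2 := mul_nonneg (sq_nonneg aξ) (sq_nonneg MS0)
      rw [hD]; linarith
    have key : ∀ r : ℝ, 0 < r → r ≤ 1 →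
        N ^ 2 + aξ ^ 2 * m ^ 2 ≤ Nξ ^ 2 + r * D := by
      intro r hr0 hr1
      have hrr : r ^ 2 ≤ r := by
        have h1 := mul_le_mul_of_nonneg_right hr1 hr0.le
        calc r ^ 2 = r * r := pow_two r
          _ ≤ 1 * r := h1
          _ = r := one_mul r
      set ξr := (r : ℂ) * ξ with hξr
      have haξr : ‖ξr‖ = r * aξ := by
        rw [hξr, norm_mul, Complex.norm_real, Real.norm_eq_abs, abs_of_pos hr0]
      set Nr := semNormA A l (T + ξr • S) with hNr
      have hNrK : Nr ≤ K := by
        have h1 := hsem_le ξr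
        rw [haξr] at h1
        have h2 : r * (aξ * MS0) ≤ 1 * (aξ * MS0) :=
          mul_le_mul_of_nonneg_right hr1 (mul_nonneg haξnn hMS0nn)
        rw [← hNr] at h1
        rw [hK]
        calc Nr ≤ MT0 + r * aξ * MS0 := h1
          _ ≤ MT0 + aξ * MS0 := by linarith
      have hNrnn : 0 ≤ Nr := hsem_nn ξr
      have hNNr : N ≤ Nr := h ξr
      have hlt : Nr - r ^ 2 < Nr := by
        have := mul_pos hr0 hr0
        have hr2 : 0 < r ^ 2 := by calc (0:ℝ) < r * r := this
                                        _ = r ^ 2 := (pow_two r).symm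
        linarith
      obtain ⟨q, hqmem, hq⟩ :=
        exists_lt_of_lt_csSup (hsetne (T + ξr • S)) hlt
      obtain ⟨x, hx, rfl⟩ := hqmem
      have hx1 : ‖R x‖ = 1 := hunit x hx
      -- Step 2: Pq (T+ξr S) x ≥ Nr² - 2r²K
      have hstep2 : Nr ^ 2 - 2 * (r ^ 2 * K) ≤ Pq R l (T + ξr • S) x := by
        rcases le_or_gt (r ^ 2) Nr with hc | hc
        · have hq1 : Nr - r ^ 2 ≤ qA A l (T + ξr • S) x := hq.le
          have hq2 : (Nr - r ^ 2) * (Nr - r ^ 2) ≤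
              qA A l (T + ξr • S) x * qA A l (T + ξr • S) x :=
            mul_self_le_mul_self (by linarith) hq1
          have hq3 := hsq (T + ξr • S) x
          have hq4 : r ^ 2 * Nr ≤ r ^ 2 * K :=
            mul_le_mul_of_nonneg_left hNrK (sq_nonneg r)
          have hq5 : 0 ≤ (r ^ 2) * (r ^ 2) := mul_nonneg (sq_nonneg r) (sq_nonneg r)
          linarith [hq2, hq3, hq4, hq5]
        · have hq1 : Nr * Nr ≤ r ^ 2 * Nr := mul_le_mul_of_nonneg_right hc.le hNrnn
          have hq2 : r ^ 2 * Nr ≤ r ^ 2 * K := mul_le_mul_of_nonneg_left hNrK (sq_nonneg r)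
          have hq3 : 0 ≤ r ^ 2 * K := mul_nonneg (sq_nonneg r) hKnn
          have hq4 := Pq_nonneg (R := R) hl0 hl1 (T + ξr • S) x
          linarith [hq1, hq2, hq3, hq4]
      have hstep2' : N ^ 2 - 2 * (r ^ 2 * K) ≤ Pq R l (T + ξr • S) x := by
        have h1 : N * N ≤ Nr * Nr := mul_self_le_mul_self hsemT_nn hNNr
        linarith [hstep2, h1]
      -- expansion
      have hexp_r := Pq_expand R l T S x ξr
      have hexp_ξ := Pq_expand R l T S x ξ
      set cc := ccq R l T S x with hcc
      have hre_r : (ξr * cc).re = r * (ξ * cc).re := by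
        rw [hξr, mul_assoc]
        exact Complex.re_ofReal_mul r (ξ * cc)
      rw [hre_r, haξr] at hexp_r
      rw [hexp_r] at hstep2'
      -- bounds
      have hPTle : Pq R l T x ≤ N ^ 2 := by
        have h1 := hsemT_ge x hx
        have h2 := hqnn T x
        have h3 : qA A l T x * qA A l T x ≤ N * N := mul_self_le_mul_self h2 h1
        linarith [hsq T x, h3]
      have hPSle : Pq R l S x ≤ MS0 ^ 2 := by
        have h1 := Pq_le_sq hl0 hl1 S hx1
        have h2 := hMS0 x hx
        have h3 : ‖R (S x)‖ * ‖R (S x)‖ ≤ MS0 * MS0 :=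
          mul_self_le_mul_self (norm_nonneg _) h2
        linarith [h1, h3]
      have hccb : ‖cc‖ ≤ MT0 * MS0 := by
        have h1 := ccq_abs_le hl0 hl1 T S hx1
        have h2 : ‖R (T x)‖ * ‖R (S x)‖ ≤ MT0 * MS0 :=
          mul_le_mul (hMT0 x hx) (hMS0 x hx) (norm_nonneg _) hMT0nn
        linarith
      have hreb : |(ξ * cc).re| ≤ aξ * (MT0 * MS0) := by
        calc |(ξ * cc).re| ≤ ‖(ξ * cc)‖ := Complex.abs_re_le_norm _
          _ = aξ * ‖cc‖ := norm_mul _ _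
          _ ≤ aξ * (MT0 * MS0) := mul_le_mul_of_nonneg_left hccb haξnn
      have habs := abs_le.1 hreb
      -- hstep2' : N^2 - 2*(r^2*K) ≤ Pq T x + 2*(r*(ξ*cc).re) + (r*aξ)^2 * Pq S x
      have hPS'' : (r * aξ) ^ 2 * Pq R l S x ≤ r ^ 2 * (aξ ^ 2 * MS0 ^ 2) := by
        have h1 := mul_le_mul_of_nonneg_left hPSle (sq_nonneg (r * aξ))
        linarith [h1]
      -- cross term lower bound (divide by r)
      have hmul : r * (-(r * (2 * K + aξ ^ 2 * MS0 ^ 2))) ≤ r * (2 * (ξ * cc).re) := by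
        linarith [hstep2', hPTle, hPS'']
      have hcross : -(r * (2 * K + aξ ^ 2 * MS0 ^ 2)) ≤ 2 * (ξ * cc).re :=
        le_of_mul_le_mul_left hmul hr0
      -- PT lower bound
      have hPTmul : r * (ξ * cc).re ≤ r * (aξ * (MT0 * MS0)) :=
        mul_le_mul_of_nonneg_left habs.2 hr0.le
      have hPTge : N ^ 2 - 2 * (r ^ 2 * K) - 2 * (r * (aξ * (MT0 * MS0)))
          - r ^ 2 * (aξ ^ 2 * MS0 ^ 2) ≤ Pq R l T x := by
        linarith [hstep2', hPTmul, hPS'']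
      -- m² ≤ PS
      have hmPS : m ^ 2 ≤ Pq R l S x := by
        have h1 := hm_le x hx
        have h2 : m * m ≤ qA A l S x * qA A l S x := mul_self_le_mul_self hm_nn h1
        linarith [hsq S x, h2]
      have hmPSa : aξ ^ 2 * m ^ 2 ≤ aξ ^ 2 * Pq R l S x :=
        mul_le_mul_of_nonneg_left hmPS (sq_nonneg aξ)
      -- final: Nξ² ≥ Pq(T+ξS) x
      have hfin : Pq R l (T + ξ • S) x ≤ Nξ ^ 2 := by
        have h1 := hsem_ge ξ x hx
        have h2 := hqnn (T + ξ • S) x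
        have h3 : qA A l (T + ξ • S) x * qA A l (T + ξ • S) x ≤ Nξ * Nξ :=
          mul_self_le_mul_self h2 h1
        linarith [hsq (T + ξ • S) x, h3]
      rw [hexp_ξ] at hfin
      have haux1 : r ^ 2 * K ≤ r * K := mul_le_mul_of_nonneg_right hrr hKnn
      have haux2 : r ^ 2 * (aξ ^ 2 * MS0 ^ 2) ≤ r * (aξ ^ 2 * MS0 ^ 2) :=
        mul_le_mul_of_nonneg_right hrr (by positivity)
      have hrD : r * D = 4 * (r * K) + 2 * (r * (aξ * (MT0 * MS0)))
          + 2 * (r * (aξ ^ 2 * MS0 ^ 2)) := by rw [hD]; ring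
      linarith [hPTge, hcross, hmPSa, hfin, haux1, haux2, hrD]
    -- conclude by letting r → 0
    by_contra hcon
    push_neg at hcon
    set ε := (N ^ 2 + aξ ^ 2 * m ^ 2 - Nξ ^ 2) / 2 with hε
    have hεpos : 0 < ε := by rw [hε]; linarith
    have hD1 : (0:ℝ) < D + 1 := by linarith
    set r := min 1 (ε / (D + 1)) with hr
    have hr0 : 0 < r := lt_min one_pos (div_pos hεpos hD1)
    have hr1 : r ≤ 1 := min_le_left _ _
    have hrD : r * D ≤ ε := by
      have h1 : r ≤ ε / (D + 1) := min_le_right _ _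
      have h2 : r * (D + 1) ≤ ε := (le_div_iff₀ hD1).mp h1
      linarith [hr0.le]
    have hkey := key r hr0 hr1
    linarith
  · -- easy direction
    intro h ξ
    have h1 := h ξ
    have h2 : semNormA A l T ^ 2 ≤ semNormA A l (T + ξ • S) ^ 2 := by
      have h3 : 0 ≤ ‖ξ‖ ^ 2 * mA A l S ^ 2 :=
        mul_nonneg (sq_nonneg _) (sq_nonneg _)
      linarith
    calc semNormA A l T = Real.sqrt (semNormA A l T ^ 2) :=
          (Real.sqrt_sq hsemT_nn).symm
      _ ≤ Real.sqrt (semNormA A l (T + ξ • S) ^ 2) := Real.sqrt_le_sqrt h2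
      _ = semNormA A l (T + ξ • S) := Real.sqrt_sq (hsem_nn ξ)
end

section
/- For bounded operators T, S on a complex Hilbert space H, T is Birkhoff–James orthogonal to S (i.e. ‖T + ξS‖ ≥ ‖T‖ for all ξ ∈ ℂ) if and only if ‖T + ξS‖² ≥ ‖T‖² + |ξ|²·[S]² for all ξ ∈ ℂ, where [S] = inf{‖Sx‖ : ‖x‖ = 1} is the minimum modulus of S. -/
open Filter Topology

/-- The minimum modulus `[S] = inf {‖Sx‖ : ‖x‖ = 1}`. -/
noncomputable def minMod {H : Type*} [NormedAddCommGroup H] [InnerProductSpace ℂ H]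
    (S : H →L[ℂ] H) : ℝ :=
  sInf {r : ℝ | ∃ x : H, ‖x‖ = 1 ∧ r = ‖S x‖}

section aux

variable {H : Type*} [NormedAddCommGroup H] [InnerProductSpace ℂ H]

lemma minMod_nonneg (S : H →L[ℂ] H) : 0 ≤ minMod S :=
  Real.sInf_nonneg (by rintro r ⟨x, hx, rfl⟩; positivity)

lemma minMod_le (S : H →L[ℂ] H) {x : H} (hx : ‖x‖ = 1) : minMod S ≤ ‖S x‖ :=
  csInf_le ⟨0, by rintro r ⟨y, hy, rfl⟩; positivity⟩ ⟨x, hx, rfl⟩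

lemma exists_unit_vec [Nontrivial H] : ∃ x : H, ‖x‖ = 1 := by
  obtain ⟨x, hx⟩ := exists_ne (0 : H)
  exact ⟨(‖x‖⁻¹ : ℂ) • x, norm_smul_inv_norm hx⟩

/-- approximate attainment of operator norm on unit sphere (squared version). -/
lemma approx_norm [Nontrivial H] (A : H →L[ℂ] H) {δ : ℝ} (hδ : 0 < δ) :
    ∃ x : H, ‖x‖ = 1 ∧ ‖A‖ ^ 2 - δ ≤ ‖A x‖ ^ 2 := by
  obtain ⟨x₀, hx₀⟩ := exists_unit_vec (H := H)
  rcases eq_or_lt_of_le (norm_nonneg A) with h0 | hpos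
  · exact ⟨x₀, hx₀, by nlinarith [norm_nonneg (A x₀)]⟩
  set ε : ℝ := min ‖A‖ (δ / (2 * ‖A‖)) with hε
  have hεpos : 0 < ε := lt_min hpos (by positivity)
  have hεle : ε ≤ ‖A‖ := min_le_left _ _
  have hεδ : 2 * ε * ‖A‖ ≤ δ := by
    have : ε ≤ δ / (2 * ‖A‖) := min_le_right _ _
    calc 2 * ε * ‖A‖ ≤ 2 * (δ / (2 * ‖A‖)) * ‖A‖ := by nlinarith
    _ = δ := by field_simp
  -- there is a unit vector with ‖A x‖ > ‖A‖ - ε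
  by_cases hc : ∃ x : H, ‖x‖ = 1 ∧ ‖A‖ - ε < ‖A x‖
  · obtain ⟨x, hx, hAx⟩ := hc
    refine ⟨x, hx, ?_⟩
    have h1 : 0 ≤ ‖A‖ - ε := by linarith
    nlinarith [hAx]
  · exfalso
    push_neg at hc
    have : ‖A‖ ≤ ‖A‖ - ε := by
      apply ContinuousLinearMap.opNorm_le_bound _ (by linarith)
      intro x
      rcases eq_or_ne x 0 with rfl | hx
      · simp
      · have hu : ‖(‖x‖⁻¹ : ℂ) • x‖ = 1 := norm_smul_inv_norm hx
        have := hc ((‖x‖⁻¹ : ℂ) • x) hu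
        rw [map_smul, norm_smul] at this
        simp only [norm_inv, Complex.norm_real, Real.norm_eq_abs,
          abs_of_nonneg (norm_nonneg x)] at this
        have hxpos : 0 < ‖x‖ := norm_pos_iff.mpr hx
        rw [inv_mul_le_iff₀ hxpos] at this
        linarith [this]
    linarith

end aux

set_option maxHeartbeats 2000000 in
theorem BJ_orthogonal_iff_sq_ineq_opNorm
    {H : Type*} [NormedAddCommGroup H] [InnerProductSpace ℂ H] [CompleteSpace H]
    [Nontrivial H] (T S : H →L[ℂ] H) :
    (∀ ξ : ℂ, ‖T‖ ≤ ‖T + ξ • S‖) ↔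
      (∀ ξ : ℂ, ‖T‖ ^ 2 + ‖ξ‖ ^ 2 * minMod S ^ 2 ≤ ‖T + ξ • S‖ ^ 2) := by
  constructor
  · intro h ξ
    refine le_of_forall_pos_le_add ?_
    intro ε hε
    set M : ℝ := ‖T‖ * (‖ξ‖ * ‖S‖) with hM
    set K : ℝ := ‖ξ‖ ^ 2 * ‖S‖ ^ 2 with hK
    have hM0 : 0 ≤ M := by positivity
    have hK0 : 0 ≤ K := by positivity
    have hD0 : (0:ℝ) < 2 + 2 * M + 2 * K := by positivity
    set t : ℝ := min 1 (ε / (2 + 2 * M + 2 * K)) with ht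
    have ht0 : 0 < t := lt_min one_pos (by positivity)
    have ht1 : t ≤ 1 := min_le_left _ _
    have htD : t * 2 + t * (2 * M) + t * (2 * K) ≤ ε := by
      have h1 : t ≤ ε / (2 + 2 * M + 2 * K) := min_le_right _ _
      have h2 : t * (2 + 2 * M + 2 * K) ≤ ε := by
        calc t * (2 + 2 * M + 2 * K) ≤ (ε / (2 + 2 * M + 2 * K)) * (2 + 2 * M + 2 * K) := by
              nlinarith
        _ = ε := by field_simp
      linarith
    -- apply hypothesis at t * ξ
    have hT : ‖T‖ ≤ ‖T + ((t : ℂ) * ξ) • S‖ := h ((t : ℂ) * ξ)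
    clear_value M K t
    obtain ⟨x, hx, hAx⟩ := approx_norm (T + ((t : ℂ) * ξ) • S) (show (0:ℝ) < t ^ 2 by positivity)
    have key : ‖T‖ ^ 2 - t ^ 2 ≤ ‖(T + ((t : ℂ) * ξ) • S) x‖ ^ 2 := by
      nlinarith [norm_nonneg (T + ((t : ℂ) * ξ) • S), norm_nonneg T]
    -- expand the norms
    set a : ℝ := ‖T x‖ with ha
    set b : ℝ := RCLike.re (inner ℂ (T x) (ξ • S x) : ℂ) with hb
    set s : ℝ := ‖S x‖ with hs
    have expand1 : ‖(T + ((t : ℂ) * ξ) • S) x‖ ^ 2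
        = a ^ 2 + 2 * (t * b) + t ^ 2 * (‖ξ‖ ^ 2 * s ^ 2) := by
      have h1 : (T + ((t : ℂ) * ξ) • S) x = T x + (t : ℂ) • (ξ • S x) := by
        simp [mul_smul, ContinuousLinearMap.add_apply]
      rw [h1, @norm_add_sq ℂ, inner_smul_right]
      have h2 : RCLike.re ((t : ℂ) * (inner ℂ (T x) (ξ • S x) : ℂ)) = t * b := by
        simp [hb]
      rw [h2, norm_smul, norm_smul]
      simp only [Complex.norm_real, Real.norm_eq_abs,
        abs_of_pos ht0]
      ring
    have expand2 : ‖(T + ξ • S) x‖ ^ 2 = a ^ 2 + 2 * b + ‖ξ‖ ^ 2 * s ^ 2 := by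
      have : (T + ξ • S) x = T x + ξ • S x := rfl
      rw [this, @norm_add_sq ℂ, norm_smul]
      ring
    -- bounds
    have haT : a ≤ ‖T‖ := by
      simpa [hx] using T.le_opNorm x
    have ha0 : 0 ≤ a := norm_nonneg _
    have hsS : s ≤ ‖S‖ := by
      simpa [hx] using S.le_opNorm x
    have hms : minMod S ≤ s := minMod_le S hx
    have hm0 : 0 ≤ minMod S := minMod_nonneg S
    have hbabs : |b| ≤ ‖ξ‖ * (a * s) := by
      have h1 : |b| ≤ ‖(inner ℂ (T x) (ξ • S x) : ℂ)‖ := by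
        exact RCLike.abs_re_le_norm (inner ℂ (T x) (ξ • S x) : ℂ)
      have h2 : ‖(inner ℂ (T x) (ξ • S x) : ℂ)‖ ≤ a * ‖ξ • S x‖ := norm_inner_le_norm _ _
      have h3 : ‖ξ • S x‖ = ‖ξ‖ * s := norm_smul ξ (S x)
      rw [h3] at h2
      calc |b| ≤ a * (‖ξ‖ * s) := le_trans h1 h2
      _ = ‖ξ‖ * (a * s) := by ring
    have hs0 : 0 ≤ s := norm_nonneg _
    clear_value a b s
    have hbM : |b| ≤ M := by
      have hprod : a * s ≤ ‖T‖ * ‖S‖ := by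
        nlinarith [norm_nonneg T, norm_nonneg S]
      have h4 : ‖ξ‖ * (a * s) ≤ ‖ξ‖ * (‖T‖ * ‖S‖) :=
        mul_le_mul_of_nonneg_left hprod (norm_nonneg ξ)
      have h5 : ‖ξ‖ * (‖T‖ * ‖S‖) = M := by rw [hM]; ring
      linarith
    have hbub : b ≤ M := le_trans (le_abs_self b) hbM
    have hblb : -M ≤ b := neg_le_of_neg_le (le_trans (neg_le_abs b) hbM)
    -- the starred inequality
    have star : ‖T‖ ^ 2 - t ^ 2 ≤ a ^ 2 + 2 * (t * b) + t ^ 2 * (‖ξ‖ ^ 2 * s ^ 2) := by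
      rw [← expand1]; exact key
    -- final: ‖(T+ξS)x‖² ≤ ‖T+ξS‖²
    have hfin : ‖(T + ξ • S) x‖ ≤ ‖T + ξ • S‖ := by
      simpa [hx] using (T + ξ • S).le_opNorm x
    have hfin2 : a ^ 2 + 2 * b + ‖ξ‖ ^ 2 * s ^ 2 ≤ ‖T + ξ • S‖ ^ 2 := by
      rw [← expand2]
      exact pow_le_pow_left₀ (norm_nonneg _) hfin 2
    -- arithmetic conclusion
    have hKs : ‖ξ‖ ^ 2 * s ^ 2 ≤ K := by
      rw [hK]
      have hs2 : s ^ 2 ≤ ‖S‖ ^ 2 := pow_le_pow_left₀ hs0 hsS 2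
      exact mul_le_mul_of_nonneg_left hs2 (sq_nonneg _)
    have hms2 : ‖ξ‖ ^ 2 * minMod S ^ 2 ≤ ‖ξ‖ ^ 2 * s ^ 2 :=
      mul_le_mul_of_nonneg_left (pow_le_pow_left₀ hm0 hms 2) (sq_nonneg _)
    -- from star: 2tb ≥ ‖T‖² - t² - a² - t²(|ξ|²s²) ≥ -t² - t²K
    have hsq : t ^ 2 * (‖ξ‖ ^ 2 * s ^ 2) ≤ t ^ 2 * K :=
      mul_le_mul_of_nonneg_left hKs (sq_nonneg t)
    have ha2le : a ^ 2 ≤ ‖T‖ ^ 2 := pow_le_pow_left₀ ha0 haT 2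
    have h2b : -(t * (1 + K)) ≤ 2 * b := by
      have h2tb : t * (-(t * (1 + K))) ≤ t * (2 * b) := by linarith [star, ha2le, hsq]
      exact (mul_le_mul_iff_right₀ ht0).mp h2tb
    have ha2 : ‖T‖ ^ 2 - t ^ 2 - 2 * (t * M) - t ^ 2 * K ≤ a ^ 2 := by
      have hbM' : t * b ≤ t * M := mul_le_mul_of_nonneg_left hbub ht0.le
      linarith
    have htt : t ^ 2 ≤ t := by nlinarith [mul_nonneg ht0.le (sub_nonneg.2 ht1)]
    have httK : t ^ 2 * K ≤ t * K := by nlinarith [mul_nonneg (sub_nonneg.2 htt) hK0]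
    have final : ‖T‖ ^ 2 + ‖ξ‖ ^ 2 * minMod S ^ 2
        ≤ a ^ 2 + 2 * b + ‖ξ‖ ^ 2 * s ^ 2 + ε := by linarith
    linarith
  · intro h ξ
    have := h ξ
    have h1 : ‖T‖ ^ 2 ≤ ‖T + ξ • S‖ ^ 2 := by
      nlinarith [sq_nonneg (‖ξ‖ * minMod S), norm_nonneg ξ, minMod_nonneg S,
        sq_nonneg (‖ξ‖), sq_nonneg (minMod S), mul_nonneg (sq_nonneg (‖ξ‖)) (sq_nonneg (minMod S))]
    nlinarith [norm_nonneg T, norm_nonneg (T + ξ • S)]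
end

section
/- For bounded operators T, S on a complex Hilbert space H, T is Birkhoff–James orthogonal to S if and only if for each θ ∈ [0,2π) there exists a sequence {x_n} of unit vectors in H with lim_{n→∞} ‖Tx_n‖ = ‖T‖ and liminf_{n→∞} Re( e^{iθ}⟨Sx_n, Tx_n⟩ ) ≥ 0. -/
open Filter Topology

private lemma BJ_exists_unit {H : Type*} [NormedAddCommGroup H] [InnerProductSpace ℂ H]
    (A : H →L[ℂ] H) {r : ℝ} (hr : 0 ≤ r) (h : r < ‖A‖) :
    ∃ x : H, ‖x‖ = 1 ∧ r < ‖A x‖ := by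
  obtain ⟨x, hx1, hx2⟩ := A.exists_lt_apply_of_lt_opNorm h
  have hx0 : x ≠ 0 := by
    rintro rfl; simp at hx2; exact absurd hx2 (not_lt.2 hr)
  have hnx : (0:ℝ) < ‖x‖ := norm_pos_iff.2 hx0
  refine ⟨((‖x‖:ℂ))⁻¹ • x, ?_, ?_⟩
  · rw [norm_smul]; simp [hnx.ne']
  · rw [map_smul, norm_smul]
    simp only [norm_inv, Complex.norm_real, Real.norm_eq_abs, abs_of_pos hnx]
    calc r < ‖A x‖ := hx2
      _ = 1 * ‖A x‖ := (one_mul _).symm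
      _ ≤ ‖x‖⁻¹ * ‖A x‖ := by
          apply mul_le_mul_of_nonneg_right _ (norm_nonneg _)
          exact (one_le_inv_iff₀).2 ⟨hnx, hx1.le⟩

private lemma BJ_key {H : Type*} [NormedAddCommGroup H] [InnerProductSpace ℂ H]
    (T S : H →L[ℂ] H) (x : H) (ξ : ℂ) :
    ‖(T + ξ • S) x‖^2
      = ‖T x‖^2 + 2 * (ξ * @inner ℂ H _ (T x) (S x)).re + ‖ξ‖^2 * ‖S x‖^2 := by
  have := norm_add_sq (𝕜 := ℂ) (T x) (ξ • S x)
  rw [inner_smul_right] at this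
  simp only [ContinuousLinearMap.add_apply, ContinuousLinearMap.smul_apply]
  rw [this, norm_smul]
  simp [Complex.mul_re]
  ring

private lemma BJ_abs_re_le {H : Type*} [NormedAddCommGroup H] [InnerProductSpace ℂ H]
    (T S : H →L[ℂ] H) {x : H} (hx : ‖x‖ = 1) {e : ℂ} (he : ‖e‖ = 1) :
    |(e * @inner ℂ H _ (T x) (S x)).re| ≤ ‖T‖ * ‖S‖ := by
  have h1 : |(e * @inner ℂ H _ (T x) (S x)).re| ≤ ‖e * @inner ℂ H _ (T x) (S x)‖ :=
    Complex.abs_re_le_norm _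
  have h2 : ‖e * @inner ℂ H _ (T x) (S x)‖ = ‖@inner ℂ H _ (T x) (S x)‖ := by
    rw [norm_mul, he, one_mul]
  have h3 : ‖@inner ℂ H _ (T x) (S x)‖ ≤ ‖T x‖ * ‖S x‖ := norm_inner_le_norm _ _
  have h4 : ‖T x‖ ≤ ‖T‖ := by
    simpa [hx] using T.le_opNorm x
  have h5 : ‖S x‖ ≤ ‖S‖ := by
    simpa [hx] using S.le_opNorm x
  calc |(e * @inner ℂ H _ (T x) (S x)).re| ≤ ‖T x‖ * ‖S x‖ := h1.trans (h2 ▸ h3)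
    _ ≤ ‖T‖ * ‖S‖ := mul_le_mul h4 h5 (norm_nonneg _) (norm_nonneg _)

theorem BJ_orthogonal_iff_exists_seq
    {H : Type*} [NormedAddCommGroup H] [InnerProductSpace ℂ H] [CompleteSpace H]
    [Nontrivial H] (T S : H →L[ℂ] H) :
    (∀ ξ : ℂ, ‖T‖ ≤ ‖T + ξ • S‖) ↔
      ∀ θ ∈ Set.Ico (0 : ℝ) (2 * Real.pi),
        ∃ x : ℕ → H, (∀ n, ‖x n‖ = 1) ∧
          Tendsto (fun n => ‖T (x n)‖) atTop (𝓝 ‖T‖) ∧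
          0 ≤ Filter.liminf
            (fun n => (Complex.exp (θ * Complex.I) *
              @inner ℂ H _ (T (x n)) (S (x n))).re) atTop := by
  constructor
  · -- forward direction
    intro hT θ hθ
    set e : ℂ := Complex.exp (θ * Complex.I) with he_def
    have he : ‖e‖ = 1 := by
      simp [he_def, Complex.norm_exp_ofReal_mul_I]
    -- t n = 1/(n+1)
    set t : ℕ → ℝ := fun n => ((n : ℝ) + 1)⁻¹ with ht_def
    have ht_pos : ∀ n, 0 < t n := fun n => by positivity
    have ht_lim : Tendsto t atTop (𝓝 0) := by
      simpa [ht_def, one_div] using (tendsto_one_div_add_atTop_nhds_zero_nat : Tendsto (fun n : ℕ => 1 / ((n : ℝ) + 1)) atTop (𝓝 0))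
    -- choose unit vectors
    have hch : ∀ n : ℕ, ∃ x : H, ‖x‖ = 1 ∧
        ‖T‖^2 - (t n)^2 ≤ ‖(T + ((t n : ℂ) * e) • S) x‖^2 := by
      intro n
      set A := T + ((t n : ℂ) * e) • S with hA
      have hAn : ‖T‖ ≤ ‖A‖ := hT _
      rcases le_or_gt ‖T‖ (t n) with h | h
      · obtain ⟨x, hx⟩ := exists_norm_eq H (zero_le_one)
        refine ⟨x, hx, le_trans ?_ (sq_nonneg _)⟩
        nlinarith [norm_nonneg T, ht_pos n, h]
      · have hr : (0:ℝ) ≤ Real.sqrt (‖T‖^2 - (t n)^2) := Real.sqrt_nonneg _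
        have hlt : Real.sqrt (‖T‖^2 - (t n)^2) < ‖A‖ := by
          refine lt_of_lt_of_le ?_ hAn
          have h1 : ‖T‖^2 - (t n)^2 < ‖T‖^2 := by nlinarith [ht_pos n]
          calc Real.sqrt (‖T‖^2 - (t n)^2) < Real.sqrt (‖T‖^2) :=
                Real.sqrt_lt_sqrt (by nlinarith [ht_pos n, h, norm_nonneg T]) h1
            _ = ‖T‖ := Real.sqrt_sq (norm_nonneg _)
        obtain ⟨x, hx1, hx2⟩ := BJ_exists_unit A hr hlt
        refine ⟨x, hx1, ?_⟩
        have := Real.sq_sqrt (show (0:ℝ) ≤ ‖T‖^2 - (t n)^2 by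
          nlinarith [ht_pos n, h, norm_nonneg T])
        nlinarith [hx2, hr]
    choose x hx1 hx2 using hch
    refine ⟨x, hx1, ?_, ?_⟩
    · -- tendsto of norms
      set a : ℕ → ℝ := fun n => (e * @inner ℂ H _ (T (x n)) (S (x n))).re with ha_def
      have hkey : ∀ n, ‖(T + ((t n : ℂ) * e) • S) (x n)‖^2
          = ‖T (x n)‖^2 + 2 * (t n * a n) + (t n)^2 * ‖S (x n)‖^2 := by
        intro n
        rw [BJ_key T S (x n) ((t n : ℂ) * e)]
        congr 1
        · congr 1
          rw [mul_assoc, Complex.re_ofReal_mul]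
        · rw [norm_mul, he, mul_one, Complex.norm_real, Real.norm_eq_abs,
            abs_of_pos (ht_pos n)]
      have habs : ∀ n, |a n| ≤ ‖T‖ * ‖S‖ := fun n => BJ_abs_re_le T S (hx1 n) he
      have hSle : ∀ n, ‖S (x n)‖ ≤ ‖S‖ := fun n => by
        simpa [hx1 n] using S.le_opNorm (x n)
      have hTle : ∀ n, ‖T (x n)‖ ≤ ‖T‖ := fun n => by
        simpa [hx1 n] using T.le_opNorm (x n)
      have hlow : ∀ n, ‖T‖^2 - (t n) * ((t n) + 2 * (‖T‖*‖S‖) + (t n) * ‖S‖^2)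
          ≤ ‖T (x n)‖^2 := by
        intro n
        have h2 := hx2 n
        rw [hkey n] at h2
        have h3 := (abs_le.1 (habs n)).2
        have h4 : (t n)^2 * ‖S (x n)‖^2 ≤ (t n)^2 * ‖S‖^2 := by
          apply mul_le_mul_of_nonneg_left _ (sq_nonneg _)
          exact pow_le_pow_left₀ (norm_nonneg _) (hSle n) 2
        nlinarith [ht_pos n]
      have hsq : Tendsto (fun n => ‖T (x n)‖^2) atTop (𝓝 (‖T‖^2)) := by
        apply tendsto_of_tendsto_of_tendsto_of_le_of_le
          (g := fun n => ‖T‖^2 - (t n) * ((t n) + 2 * (‖T‖*‖S‖) + (t n) * ‖S‖^2))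
          (h := fun _ => ‖T‖^2)
        · have : Tendsto (fun n => (t n) * ((t n) + 2 * (‖T‖*‖S‖) + (t n) * ‖S‖^2))
              atTop (𝓝 (0 * (0 + 2 * (‖T‖*‖S‖) + 0 * ‖S‖^2))) := by
            exact (ht_lim.mul ((ht_lim.add tendsto_const_nhds).add
              (ht_lim.mul tendsto_const_nhds)))
          simpa using tendsto_const_nhds.sub this
        · exact tendsto_const_nhds
        · exact hlow
        · intro n; exact pow_le_pow_left₀ (norm_nonneg _) (hTle n) 2
      have hth := (Real.continuous_sqrt.tendsto (‖T‖^2)).comp hsq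
      simp only [Function.comp_def] at hth
      rw [show ‖T‖ = Real.sqrt (‖T‖^2) from (Real.sqrt_sq (norm_nonneg _)).symm]
      exact hth.congr fun n => Real.sqrt_sq (norm_nonneg _)
    · -- liminf
      set a : ℕ → ℝ := fun n => (e * @inner ℂ H _ (T (x n)) (S (x n))).re with ha_def
      have hkey : ∀ n, ‖(T + ((t n : ℂ) * e) • S) (x n)‖^2
          = ‖T (x n)‖^2 + 2 * (t n * a n) + (t n)^2 * ‖S (x n)‖^2 := by
        intro n
        rw [BJ_key T S (x n) ((t n : ℂ) * e)]
        congr 1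
        · congr 1
          rw [mul_assoc, Complex.re_ofReal_mul]
        · rw [norm_mul, he, mul_one, Complex.norm_real, Real.norm_eq_abs,
            abs_of_pos (ht_pos n)]
      have habs : ∀ n, |a n| ≤ ‖T‖ * ‖S‖ := fun n => BJ_abs_re_le T S (hx1 n) he
      have hTle : ∀ n, ‖T (x n)‖ ≤ ‖T‖ := fun n => by
        simpa [hx1 n] using T.le_opNorm (x n)
      have hSle : ∀ n, ‖S (x n)‖ ≤ ‖S‖ := fun n => by
        simpa [hx1 n] using S.le_opNorm (x n)
      -- lower bound: a n ≥ -(t n)*(1 + ‖S‖^2)/2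
      set c : ℕ → ℝ := fun n => -(t n) * (1 + ‖S‖^2) / 2 with hc_def
      have hca : ∀ n, c n ≤ a n := by
        intro n
        have h2 := hx2 n
        rw [hkey n] at h2
        have h4 : (t n)^2 * ‖S (x n)‖^2 ≤ (t n)^2 * ‖S‖^2 := by
          apply mul_le_mul_of_nonneg_left _ (sq_nonneg _)
          exact pow_le_pow_left₀ (norm_nonneg _) (hSle n) 2
        have h5 : ‖T (x n)‖^2 ≤ ‖T‖^2 :=
          pow_le_pow_left₀ (norm_nonneg _) (hTle n) 2
        have htn := ht_pos n
        have htn1 : t n ≤ 1 := by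
          rw [ht_def]
          simp only
          rw [inv_le_one_iff₀]
          right; linarith [Nat.cast_nonneg (α := ℝ) n]
        rw [hc_def]
        simp only
        rw [div_le_iff₀ (by norm_num : (0:ℝ) < 2)]
        nlinarith
      have hc_lim : Tendsto c atTop (𝓝 0) := by
        rw [hc_def, show (0:ℝ) = -(0:ℝ) * (1 + ‖S‖^2) / 2 by ring]
        exact (ht_lim.neg.mul tendsto_const_nhds).div_const 2
      have h1 : Filter.liminf c atTop = 0 := hc_lim.liminf_eq
      calc (0:ℝ) = Filter.liminf c atTop := h1.symm
        _ ≤ Filter.liminf a atTop := by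
            refine Filter.liminf_le_liminf (Filter.Eventually.of_forall hca) ?_ ?_
            · refine Filter.isBoundedUnder_of ⟨-(1 + ‖S‖^2) / 2, fun n => ?_⟩
              have h1 := (ht_pos n).le
              have h2 : t n ≤ 1 := by
                rw [ht_def]; simp only
                rw [inv_le_one_iff₀]
                right; linarith [Nat.cast_nonneg (α := ℝ) n]
              rw [hc_def]
              have h3 : (0:ℝ) ≤ 1 + ‖S‖^2 := by positivity
              show -(1 + ‖S‖^2) / 2 ≤ -t n * (1 + ‖S‖^2) / 2
              nlinarith
            · exact Filter.IsBoundedUnder.isCoboundedUnder_ge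
                (Filter.isBoundedUnder_of ⟨‖T‖ * ‖S‖, fun n => (abs_le.1 (habs n)).2⟩)
  · -- backward direction
    intro h ξ
    rcases eq_or_ne ξ 0 with rfl | hξ0
    · simp
    -- choose θ ∈ [0, 2π) with ξ = ‖ξ‖ * exp(θ I)
    set θ₀ := Complex.arg ξ with hθ₀
    set θ : ℝ := if 0 ≤ θ₀ then θ₀ else θ₀ + 2 * Real.pi with hθ_def
    have hθmem : θ ∈ Set.Ico (0:ℝ) (2 * Real.pi) := by
      have h1 : -Real.pi < θ₀ := Complex.neg_pi_lt_arg ξ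
      have h2 : θ₀ ≤ Real.pi := Complex.arg_le_pi ξ
      have hpi := Real.pi_pos
      rw [hθ_def]
      split_ifs with hc
      · exact ⟨hc, by linarith⟩
      · push_neg at hc
        constructor <;> [linarith; linarith]
    have hexp : Complex.exp (θ * Complex.I) = Complex.exp (θ₀ * Complex.I) := by
      rw [hθ_def]
      split_ifs with hc
      · rfl
      · push_cast
        rw [add_mul, Complex.exp_add]
        have : Complex.exp (2 * Real.pi * Complex.I) = 1 := by
          exact Complex.exp_two_pi_mul_I
        rw [this, mul_one]
    have hξ : ξ = (‖ξ‖ : ℂ) * Complex.exp (θ * Complex.I) := by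
      rw [hexp, hθ₀]
      exact (Complex.norm_mul_exp_arg_mul_I ξ).symm
    obtain ⟨x, hx1, hx2, hx3⟩ := h θ hθmem
    set e : ℂ := Complex.exp (θ * Complex.I) with he_def
    have he : ‖e‖ = 1 := by
      simp [he_def, Complex.norm_exp_ofReal_mul_I]
    set a : ℕ → ℝ := fun n => (e * @inner ℂ H _ (T (x n)) (S (x n))).re with ha_def
    have habs : ∀ n, |a n| ≤ ‖T‖ * ‖S‖ := fun n => BJ_abs_re_le T S (hx1 n) he
    -- main estimate: for every ε > 0, ‖T‖^2 ≤ ‖T + ξ S‖^2 + ε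
    have hmain : ∀ ε > (0:ℝ), ‖T‖^2 ≤ ‖T + ξ • S‖^2 + ε := by
      intro ε hε
      set δ := ε / (1 + 2 * ‖ξ‖) with hδ_def
      have hδ : 0 < δ := by
        apply div_pos hε
        have := norm_nonneg ξ; linarith
      -- eventually ‖T x n‖^2 > ‖T‖^2 - δ
      have hev1 : ∀ᶠ n in atTop, ‖T‖^2 - δ < ‖T (x n)‖^2 := by
        have hsq : Tendsto (fun n => ‖T (x n)‖^2) atTop (𝓝 (‖T‖^2)) := by
          have := hx2.mul hx2
          simpa [sq] using this
        have : Set.Ioi (‖T‖^2 - δ) ∈ 𝓝 (‖T‖^2) := Ioi_mem_nhds (by linarith)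
        exact hsq.eventually_mem this
      -- eventually a n > -δ
      have hev2 : ∀ᶠ n in atTop, -δ < a n := by
        refine Filter.eventually_lt_of_lt_liminf (lt_of_lt_of_le (by linarith) hx3) ?_
        exact Filter.isBoundedUnder_of ⟨-(‖T‖ * ‖S‖), fun n => (abs_le.1 (habs n)).1⟩
      obtain ⟨n, hn1, hn2⟩ := (hev1.and hev2).exists
      have hkey := BJ_key T S (x n) ξ
      have hre : (ξ * @inner ℂ H _ (T (x n)) (S (x n))).re = ‖ξ‖ * a n := by
        rw [ha_def]
        simp only
        conv_lhs => rw [hξ]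
        rw [mul_assoc, Complex.re_ofReal_mul]
      have hAle : ‖(T + ξ • S) (x n)‖ ≤ ‖T + ξ • S‖ := by
        simpa [hx1 n] using (T + ξ • S).le_opNorm (x n)
      have hA2 : ‖(T + ξ • S) (x n)‖^2 ≤ ‖T + ξ • S‖^2 :=
        pow_le_pow_left₀ (norm_nonneg _) hAle 2
      rw [hkey, hre] at hA2
      have hξn : 0 ≤ ‖ξ‖ := norm_nonneg ξ
      have hδε : δ * (1 + 2 * ‖ξ‖) = ε := by
        rw [hδ_def]
        field_simp
      nlinarith [sq_nonneg (‖ξ‖ * ‖S (x n)‖), sq_nonneg ‖S (x n)‖]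
    have hsq : ‖T‖^2 ≤ ‖T + ξ • S‖^2 := le_of_forall_pos_le_add hmain
    have := Real.sqrt_le_sqrt hsq
    rwa [Real.sqrt_sq (norm_nonneg _), Real.sqrt_sq (norm_nonneg _)] at this
end
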